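/- Let q(x) = ∃y. φ(x,y) be a rooted CQ, K a DL-Lite_core^bag ontology with TBox T, and z ⊆ y. If z is not realisable by T, then [q,z]^{C(K)} = ∅ (the empty bag). -/

import Mathlib

/-!
Common formalization of the bag semantics of DL-Lite ontologies
(Nikolaou et al., "The Bag Semantics of Ontology-Based Data Access").
-/

open scoped Classical

noncomputable section

/-- Individuals (constants). -/
abbrev Ind : Type := ℕ
/-- Variables. -/
abbrev Var : Type := ℕ
/-- Atomic concepts (unary predicates). -/
abbrev AtomicConcept : Type := ℕ
/-- Atomic roles (binary predicates). -/
abbrev AtomicRole : Type := ℕ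

/-- A role is an atomic role or its inverse. -/
inductive Role where
  | atomic : AtomicRole → Role
  | inv : AtomicRole → Role
  deriving DecidableEq

/-- A concept is an atomic concept or `∃R` for a role `R`. -/
inductive DLConcept where
  | atomic : AtomicConcept → DLConcept
  | ex : Role → DLConcept
  deriving DecidableEq

/-- TBox axioms: inclusions and disjointness axioms between concepts or roles. -/
inductive TBoxAxiom where
  | cIncl : DLConcept → DLConcept → TBoxAxiom
  | rIncl : Role → Role → TBoxAxiom
  | cDisj : DLConcept → DLConcept → TBoxAxiom
  | rDisj : Role → Role → TBoxAxiom
  deriving DecidableEq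

/-- A DL-Lite_R TBox: a finite set of TBox axioms. -/
abbrev TBox : Type := Finset TBoxAxiom

/-- A DL-Lite_core TBox: only concept inclusions and concept disjointness axioms. -/
def TBox.IsCore (T : TBox) : Prop :=
  ∀ ax ∈ T, (∃ C D, ax = TBoxAxiom.cIncl C D) ∨ (∃ C D, ax = TBoxAxiom.cDisj C D)

/-- ABox assertions. -/
inductive Assertion where
  | conceptA : AtomicConcept → Ind → Assertion
  | roleA : AtomicRole → Ind → Ind → Assertion
  deriving DecidableEq

/-- A bag ABox: a finite bag of assertions (represented as a multiset). -/
abbrev BagABox : Type := Multiset Assertion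

/-- Multiplicity of an assertion in a bag ABox, as an extended natural. -/
def BagABox.mult (A : BagABox) (s : Assertion) : ℕ∞ := (A.count s : ℕ∞)

/-- Sum of an arbitrary family of extended naturals. -/
def bagSum {α : Type*} (f : α → ℕ∞) : ℕ∞ := ⨆ s : Finset α, ∑ x ∈ s, f x

/-- A bag interpretation. -/
structure BagInterp : Type 1 where
  Δ : Type
  dne : Nonempty Δ
  indMap : Ind → Δ
  indInj : Function.Injective indMap
  cI : AtomicConcept → Δ → ℕ∞
  rI : AtomicRole → Δ → Δ → ℕ∞

/-- Extension of the interpretation function to roles. -/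
def BagInterp.roleMult (I : BagInterp) : Role → I.Δ → I.Δ → ℕ∞
  | Role.atomic P => fun u v => I.rI P u v
  | Role.inv P => fun u v => I.rI P v u

/-- Extension of the interpretation function to concepts. -/
def BagInterp.conceptMult (I : BagInterp) : DLConcept → I.Δ → ℕ∞
  | DLConcept.atomic A => fun u => I.cI A u
  | DLConcept.ex R => fun u => bagSum (fun v => I.roleMult R u v)

/-- Multiplicity of an assertion in a bag interpretation. -/
def BagInterp.assertMult (I : BagInterp) : Assertion → ℕ∞
  | Assertion.conceptA A a => I.cI A (I.indMap a)
  | Assertion.roleA P a b => I.rI P (I.indMap a) (I.indMap b)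

/-- Satisfaction of a TBox axiom by a bag interpretation. -/
def BagInterp.SatisfiesAx (I : BagInterp) : TBoxAxiom → Prop
  | TBoxAxiom.cIncl C D => ∀ u, I.conceptMult C u ≤ I.conceptMult D u
  | TBoxAxiom.rIncl R S => ∀ u v, I.roleMult R u v ≤ I.roleMult S u v
  | TBoxAxiom.cDisj C D => ∀ u, min (I.conceptMult C u) (I.conceptMult D u) = 0
  | TBoxAxiom.rDisj R S => ∀ u v, min (I.roleMult R u v) (I.roleMult S u v) = 0

/-- A DL-Lite^bag ontology. -/
structure Ontology : Type where
  tbox : TBox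
  abox : BagABox

/-- `I` is a bag model of the ontology `K`. -/
def BagInterp.IsModel (I : BagInterp) (K : Ontology) : Prop :=
  (∀ ax ∈ K.tbox, I.SatisfiesAx ax) ∧
  ∀ s : Assertion, BagABox.mult K.abox s ≤ I.assertMult s

/-- Satisfiability of an ontology under bag semantics. -/
def Ontology.Satisfiable (K : Ontology) : Prop := ∃ I : BagInterp, I.IsModel K

/- ## Conjunctive queries -/

/-- Terms: variables or individuals. -/
inductive Term where
  | var : Var → Term
  | ind : Ind → Term
  deriving DecidableEq

def Term.varsOf : Term → List Var
  | Term.var v => [v]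
  | Term.ind _ => []

def Term.indsOf : Term → List Ind
  | Term.var _ => []
  | Term.ind a => [a]

/-- Query atoms: concept atoms, role atoms, and equalities. -/
inductive QAtom where
  | conceptAt : AtomicConcept → Term → QAtom
  | roleAt : AtomicRole → Term → Term → QAtom
  | eqAt : Var → Term → QAtom
  deriving DecidableEq

def QAtom.terms : QAtom → List Term
  | QAtom.conceptAt _ t => [t]
  | QAtom.roleAt _ t₁ t₂ => [t₁, t₂]
  | QAtom.eqAt z t => [Term.var z, t]

def QAtom.vars : QAtom → List Var
  | QAtom.conceptAt _ t => t.varsOf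
  | QAtom.roleAt _ t₁ t₂ => t₁.varsOf ++ t₂.varsOf
  | QAtom.eqAt z t => z :: t.varsOf

/-- A conjunctive query `q(x) = ∃y. φ(x,y)`: a tuple of answer variables,
a tuple of existential variables, and a conjunction (list, i.e. allowing
repetitions) of atoms. -/
structure CQ : Type where
  answerVars : List Var
  existVars : List Var
  atoms : List QAtom

def CQ.vars (q : CQ) : List Var := q.answerVars ++ q.existVars

/-- Value of a term under a valuation of the variables. -/
def termVal (I : BagInterp) (f : Var → I.Δ) : Term → I.Δ
  | Term.var v => f v
  | Term.ind a => I.indMap a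

/-- Multiplicity contributed by an atom under a valuation: for predicate atoms the
multiplicity of the image tuple, for equalities the indicator of satisfaction. -/
def QAtom.mult (I : BagInterp) (f : Var → I.Δ) : QAtom → ℕ∞
  | QAtom.conceptAt A t => I.cI A (termVal I f t)
  | QAtom.roleAt P t₁ t₂ => I.rI P (termVal I f t₁) (termVal I f t₂)
  | QAtom.eqAt z t => if f z = termVal I f t then 1 else 0

/-- The bag answers `q^I(ā)`: the sum, over all valuations of the variables of `q`
mapping the answer variables to `ā` (valuations are normalized to a fixed junk
value outside the variables of `q`), of the product of the multiplicities of the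
atom occurrences of `q`. -/
def CQ.bagAnswer (q : CQ) (I : BagInterp) (a : List Ind) : ℕ∞ :=
  bagSum (fun f : {f : Var → I.Δ //
      (∀ v, v ∉ q.vars → f v = I.indMap 0) ∧
      q.answerVars.map f = a.map I.indMap} =>
    (q.atoms.map (QAtom.mult I f.1)).prod)

/-- Bag certain answers: pointwise minimum over all bag models. -/
def bagCertain (K : Ontology) (q : CQ) (a : List Ind) : ℕ∞ :=
  ⨅ (I : BagInterp) (_ : I.IsModel K), q.bagAnswer I a

/-- Base relation of the equivalence relation generated by the equality atoms. -/
def CQ.eqBase (q : CQ) : Term → Term → Prop := fun t₁ t₂ =>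
  ∃ z t, QAtom.eqAt z t ∈ q.atoms ∧ t₁ = Term.var z ∧ t₂ = t

/-- Equivalence of terms generated by the equality atoms of `q`. -/
def CQ.eqRel (q : CQ) : Term → Term → Prop := Relation.EqvGen q.eqBase

/-- Safety: the class of every variable contains a term occurring in a
non-equality atom. -/
def CQ.Safe (q : CQ) : Prop :=
  ∀ v ∈ q.vars, ∃ t : Term, ∃ atm ∈ q.atoms,
    (∀ z s, atm ≠ QAtom.eqAt z s) ∧ t ∈ QAtom.terms atm ∧ q.eqRel (Term.var v) t

/-- Well-formedness of CQs: repetition-free disjoint tuples of variables, all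
variables of the atoms among the declared variables, and safety. -/
def CQ.WellFormed (q : CQ) : Prop :=
  q.answerVars.Nodup ∧ q.existVars.Nodup ∧
  (∀ v ∈ q.answerVars, v ∉ q.existVars) ∧
  (∀ atm ∈ q.atoms, ∀ v ∈ QAtom.vars atm, v ∈ q.vars) ∧
  q.Safe

def CQ.mentionsTerm (q : CQ) (t : Term) : Prop := ∃ atm ∈ q.atoms, t ∈ QAtom.terms atm

/-- Adjacency in the Gaifman graph of `q` (on terms; equality atoms merge the
classes of their two terms, which for connectivity purposes is the same as
making them adjacent). -/
def CQ.gaifmanAdj (q : CQ) : Term → Term → Prop := fun t₁ t₂ =>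
  ∃ atm ∈ q.atoms, t₁ ∈ QAtom.terms atm ∧ t₂ ∈ QAtom.terms atm

/-- A CQ is rooted if every connected component of its Gaifman graph contains
an answer variable or an individual. -/
def CQ.Rooted (q : CQ) : Prop :=
  ∀ t : Term, q.mentionsTerm t →
    ∃ t' : Term, Relation.ReflTransGen q.gaifmanAdj t t' ∧
      ((∃ v ∈ q.answerVars, t' = Term.var v) ∨ ∃ a : Ind, t' = Term.ind a)

/- ## Set semantics -/

/-- A classical (set) interpretation. -/
structure SetInterp : Type 1 where
  Δ : Type
  dne : Nonempty Δ
  indMap : Ind → Δ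
  indInj : Function.Injective indMap
  cI : AtomicConcept → Set Δ
  rI : AtomicRole → Set (Δ × Δ)

def SetInterp.roleSet (I : SetInterp) : Role → Set (I.Δ × I.Δ)
  | Role.atomic P => I.rI P
  | Role.inv P => {p | (p.2, p.1) ∈ I.rI P}

def SetInterp.conceptSet (I : SetInterp) : DLConcept → Set I.Δ
  | DLConcept.atomic A => I.cI A
  | DLConcept.ex R => {u | ∃ v, (u, v) ∈ I.roleSet R}

def SetInterp.SatisfiesAx (I : SetInterp) : TBoxAxiom → Prop
  | TBoxAxiom.cIncl C D => I.conceptSet C ⊆ I.conceptSet D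
  | TBoxAxiom.rIncl R S => I.roleSet R ⊆ I.roleSet S
  | TBoxAxiom.cDisj C D => I.conceptSet C ∩ I.conceptSet D = ∅
  | TBoxAxiom.rDisj R S => I.roleSet R ∩ I.roleSet S = ∅

def SetInterp.SatisfiesAssertion (I : SetInterp) : Assertion → Prop
  | Assertion.conceptA A a => I.indMap a ∈ I.cI A
  | Assertion.roleA P a b => (I.indMap a, I.indMap b) ∈ I.rI P

/-- `I` is a (set) model of the TBox `T` and the set ABox `A`. -/
def SetInterp.IsModelOf (I : SetInterp) (T : TBox) (A : Finset Assertion) : Prop :=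
  (∀ ax ∈ T, I.SatisfiesAx ax) ∧ ∀ s ∈ A, I.SatisfiesAssertion s

def setTermVal (I : SetInterp) (f : Var → I.Δ) : Term → I.Δ
  | Term.var v => f v
  | Term.ind a => I.indMap a

def SetInterp.SatAtom (I : SetInterp) (f : Var → I.Δ) : QAtom → Prop
  | QAtom.conceptAt A t => setTermVal I f t ∈ I.cI A
  | QAtom.roleAt P t₁ t₂ => (setTermVal I f t₁, setTermVal I f t₂) ∈ I.rI P
  | QAtom.eqAt z t => f z = setTermVal I f t

/-- `q(ā)` holds in the set interpretation `I`. -/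
def SetInterp.SatCQ (I : SetInterp) (q : CQ) (a : List Ind) : Prop :=
  ∃ f : Var → I.Δ, q.answerVars.map f = a.map I.indMap ∧ ∀ atm ∈ q.atoms, I.SatAtom f atm

/-- Entailment of a concept inclusion from a TBox (standard set semantics). -/
def TBox.EntailsCI (T : TBox) (C D : DLConcept) : Prop :=
  ∀ I : SetInterp, (∀ ax ∈ T, I.SatisfiesAx ax) → I.conceptSet C ⊆ I.conceptSet D

/- ## The canonical bag model -/

/-- Domain elements of the canonical model: individuals and anonymous elements
`w^j_{u,R}`. -/
inductive CanElem where
  | ind : Ind → CanElem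
  | anon : CanElem → Role → ℕ → CanElem
  deriving DecidableEq

def CanElem.isAnon : CanElem → Prop
  | CanElem.ind _ => False
  | CanElem.anon _ _ _ => True

/-- A stage of the canonical-model construction: a set of active elements and
bag interpretations of the predicates. -/
structure PreInterp : Type where
  active : Set CanElem
  c : AtomicConcept → CanElem → ℕ∞
  r : AtomicRole → CanElem → CanElem → ℕ∞

def PreInterp.toInterp (P : PreInterp) : BagInterp where
  Δ := CanElem
  dne := ⟨CanElem.ind 0⟩
  indMap := CanElem.ind
  indInj := fun a b h => by cases h; rfl
  cI := P.c
  rI := P.r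

/-- Concept closure: `ccl(u,I,T)(C)` is the supremum of `C₀^I(u)` over all
concepts `C₀` with `T ⊨ C₀ ⊑ C`. -/
def cclI (T : TBox) (I : BagInterp) (C : DLConcept) (u : I.Δ) : ℕ∞ :=
  ⨆ C₀ : {C₀ : DLConcept // TBox.EntailsCI T C₀ C}, I.conceptMult C₀.1 u

def PreInterp.ccl (P : PreInterp) (T : TBox) (u : CanElem) (C : DLConcept) : ℕ∞ :=
  cclI T P.toInterp C u

/-- `δ = ccl(u,C_{i-1},T)(∃R) − (∃R)^{C_{i-1}}(u)` (truncated subtraction). -/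
def PreInterp.delta (P : PreInterp) (T : TBox) (u : CanElem) (R : Role) : ℕ∞ :=
  P.ccl T u (DLConcept.ex R) - P.toInterp.conceptMult (DLConcept.ex R) u

/-- The anonymous elements freshly added when stepping from `P`. -/
def PreInterp.NewAnon (P : PreInterp) (T : TBox) (w : CanElem) : Prop :=
  ∃ u R j, w = CanElem.anon u R j ∧ u ∈ P.active ∧ (j : ℕ∞) < P.delta T u R

/-- One step of the canonical-model construction. -/
def PreInterp.step (P : PreInterp) (T : TBox) : PreInterp where
  active := P.active ∪ {w | P.NewAnon T w}
  c := fun A u => if u ∈ P.active then P.ccl T u (DLConcept.atomic A) else 0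
  r := fun P₀ u v =>
    if u ∈ P.active ∧ v ∈ P.active then P.r P₀ u v
    else if ∃ j, v = CanElem.anon u (Role.atomic P₀) j ∧ P.NewAnon T v then 1
    else if ∃ j, u = CanElem.anon v (Role.inv P₀) j ∧ P.NewAnon T u then 1
    else 0

/-- The stages `C_i(K)` of the canonical bag model. -/
def canStage (K : Ontology) : ℕ → PreInterp
  | 0 =>
    { active := Set.range CanElem.ind
      c := fun A u =>
        match u with
        | CanElem.ind a => BagABox.mult K.abox (Assertion.conceptA A a)
        | _ => 0
      r := fun P u v =>
        match u, v with
        | CanElem.ind a, CanElem.ind b => BagABox.mult K.abox (Assertion.roleA P a b)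
        | _, _ => 0 }
  | (i + 1) => (canStage K i).step K.tbox

/-- The canonical bag model `C(K) = ⋃_{i ≥ 0} C_i(K)` (pointwise maximum). -/
def canInterp (K : Ontology) : BagInterp where
  Δ := CanElem
  dne := ⟨CanElem.ind 0⟩
  indMap := CanElem.ind
  indInj := fun a b h => by cases h; rfl
  cI := fun A u => ⨆ i, (canStage K i).c A u
  rI := fun P u v => ⨆ i, (canStage K i).r P u v

/-- The canonical bag model `C(⟨∅,A⟩)` of the ontology with empty TBox:
individuals as domain, every predicate interpreted by its ABox bag. -/
def emptyCanInterp (A : BagABox) : BagInterp where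
  Δ := Ind
  dne := ⟨0⟩
  indMap := id
  indInj := fun _ _ h => h
  cI := fun C a => BagABox.mult A (Assertion.conceptA C a)
  rI := fun P a b => BagABox.mult A (Assertion.roleA P a b)

/-- `[q,z]^{C(K)}`: bag answers over the canonical model computed only over
valuations sending the variables of `z` to anonymous elements and the remaining
existential variables to individuals. -/
def CQ.restrictedAnswer (q : CQ) (K : Ontology) (z : Finset Var) (a : List Ind) : ℕ∞ :=
  bagSum (fun f : {f : Var → CanElem //
      (∀ v, v ∉ q.vars → f v = CanElem.ind 0) ∧
      q.answerVars.map f = a.map CanElem.ind ∧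
      ∀ v ∈ q.existVars, (v ∈ z → CanElem.isAnon (f v)) ∧ (v ∉ z → ∃ b : Ind, f v = CanElem.ind b)} =>
    (q.atoms.map (QAtom.mult (canInterp K) f.1)).prod)

/- ## Ma-connected subsets, realisability, and the per-`z` rewritten query -/

/-- `t` is a variable belonging to `z`. -/
def Term.IsZVar (t : Term) (z : Finset Var) : Prop := ∃ v ∈ z, t = Term.var v

/-- Adjacency in the Gaifman graph restricted to nodes that are variables of `z`. -/
def CQ.zAdj (q : CQ) (z : Finset Var) : Term → Term → Prop := fun t₁ t₂ =>
  q.gaifmanAdj t₁ t₂ ∧ t₁.IsZVar z ∧ t₂.IsZVar z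

/-- `z'` is maximally connected in the anonymous part (ma-connected) within `z`. -/
def CQ.MAConnected (q : CQ) (z z' : Finset Var) : Prop :=
  z' ⊆ z ∧
  (∀ v ∈ z', ∀ w ∈ z, Relation.ReflTransGen (q.zAdj z) (Term.var v) (Term.var w) → w ∈ z') ∧
  (∀ v ∈ z', ∀ w ∈ z', Relation.ReflTransGen (q.zAdj z) (Term.var v) (Term.var w))

/-- `φ_{z'}`: the subconjunction of all atoms of `q` mentioning a variable of `z'`. -/
def CQ.subAtoms (q : CQ) (z' : Finset Var) : List QAtom :=
  q.atoms.filter (fun atm => decide (∃ v ∈ z', v ∈ QAtom.vars atm))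

def termsOfList (l : List QAtom) : List Term :=
  l.foldr (fun atm acc => QAtom.terms atm ++ acc) []

/-- `t_{z'}`: all terms occurring in `φ_{z'}` that are not variables of `z`. -/
def CQ.tTerms (q : CQ) (z z' : Finset Var) : List Term :=
  (termsOfList (q.subAtoms z')).filter (fun t => decide (¬ t.IsZVar z))

/-- `atm` is a legitimate choice of `α_{z'}`: an atom of `φ_{z'}` of the form
`P(t,z)` or `P(z,t)` with `z ∈ z'` and the term `t` not a variable of `z`. -/
def IsAlphaFor (q : CQ) (z z' : Finset Var) (atm : QAtom) : Prop :=
  atm ∈ q.subAtoms z' ∧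
  ((∃ P t v, v ∈ z' ∧ ¬ Term.IsZVar t z ∧ atm = QAtom.roleAt P t (Term.var v)) ∨
   (∃ P t v, v ∈ z' ∧ ¬ Term.IsZVar t z ∧ atm = QAtom.roleAt P (Term.var v) t))

def CQ.inds (q : CQ) : List Ind :=
  (termsOfList q.atoms).foldr (fun t acc => t.indsOf ++ acc) []

def CQ.maxInd (q : CQ) : Ind := q.inds.foldr max 0

/-- The individual `a` of `q^a_{z'}`: the individual among `t_{z'}` if one
exists, and a fresh individual otherwise. -/
def freshA (q : CQ) (z z' : Finset Var) : Ind :=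
  if h : ∃ c : Ind, Term.ind c ∈ q.tTerms z z' then h.choose else q.maxInd + 1

/-- A fresh individual `b` (distinct from `freshA`). -/
def freshB (q : CQ) : Ind := q.maxInd + 2

/-- The one-assertion bag ABox `A'` used to test realisability: `{P(a,b)}` if
`α_{z'} = P(t,z)` and `{P(b,a)}` if `α_{z'} = P(z,t)`. -/
def alphaABox (z' : Finset Var) (atm : QAtom) (a b : Ind) : BagABox :=
  match atm with
  | QAtom.roleAt P _ t₂ =>
      if Term.IsZVar t₂ z' then {Assertion.roleA P a b} else {Assertion.roleA P b a}
  | _ => 0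

def subVars (q : CQ) (z' : Finset Var) : List Var :=
  (q.subAtoms z').foldr (fun atm acc => QAtom.vars atm ++ acc) []

/-- The bag answer `(q^a_{z'})^{C(⟨T,A'⟩)}(⟨⟩)` of the Boolean query
`q^a_{z'}() = ∃x'.∃z'. φ_{z'} ∧ ⋀_{t ∈ t_{z'}}(t = a) ∧ ⋀_{z ∈ z'}(z ≠ a)`
over the canonical model of `⟨T,A'⟩`. -/
def realQAnswer (T : TBox) (q : CQ) (z z' : Finset Var) (atm : QAtom) : ℕ∞ :=
  bagSum (fun f : {f : Var → CanElem //
      (∀ v, v ∉ subVars q z' → f v = CanElem.ind 0) ∧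
      (∀ t ∈ q.tTerms z z',
        termVal (canInterp ⟨T, alphaABox z' atm (freshA q z z') (freshB q)⟩) f t
          = CanElem.ind (freshA q z z')) ∧
      ∀ v ∈ z', f v ≠ CanElem.ind (freshA q z z')} =>
    ((q.subAtoms z').map
      (QAtom.mult (canInterp ⟨T, alphaABox z' atm (freshA q z z') (freshB q)⟩) f.1)).prod)

/-- Equality-consistency of `z`: no equality atom `z = t` with `z ∈ z` and `t ∉ z`. -/
def EqConsistent (q : CQ) (z : Finset Var) : Prop :=
  ∀ v t, QAtom.eqAt v t ∈ q.atoms → v ∈ z → Term.IsZVar t z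

/-- The ma-connected subset `z'` is realisable by `T` (w.r.t. the chosen `α_{z'}`). -/
def RealisableMA (T : TBox) (q : CQ) (z z' : Finset Var) (atm : QAtom) : Prop :=
  1 ≤ realQAnswer T q z z' atm

/-- `z` is realisable by `T`: equality-consistent and every nonempty
ma-connected subset of `z` is realisable. -/
def RealisableZ (T : TBox) (q : CQ) (z : Finset Var) (alpha : Finset Var → QAtom) : Prop :=
  EqConsistent q z ∧
  ∀ z' : Finset Var, q.MAConnected z z' → z'.Nonempty → RealisableMA T q z z' (alpha z')

/-- The nonempty ma-connected subsets of `z`. -/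
def maSets (q : CQ) (z : Finset Var) : Finset (Finset Var) :=
  z.powerset.filter (fun z' => q.MAConnected z z' ∧ z'.Nonempty)

def tTermVars (q : CQ) (z z' : Finset Var) : List Var :=
  (q.tTerms z z').foldr (fun t acc => Term.varsOf t ++ acc) []

/-- The equalities identifying all the terms of `t_{z'}`. -/
def eqAtomsFor (q : CQ) (z z' : Finset Var) : List QAtom :=
  (tTermVars q z z').foldr
    (fun v acc => ((q.tTerms z z').map (fun t => QAtom.eqAt v t)) ++ acc) []

/-- Atoms of `q_z`: the atoms of `q` not mentioning a variable of `z`, plus,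
for each nonempty ma-connected `z' ⊆ z`, the atom `α_{z'}` together with the
equalities identifying the terms of `t_{z'}`. -/
def qzAtoms (q : CQ) (z : Finset Var) (alpha : Finset Var → QAtom) : List QAtom :=
  q.atoms.filter (fun atm => decide (¬ ∃ v ∈ z, v ∈ QAtom.vars atm))
    ++ (maSets q z).toList.foldr (fun z' acc => alpha z' :: (eqAtomsFor q z z' ++ acc)) []

/-- The CQ `q_z(x) = ∃y'. φ_z(x,y')`. -/
def qz (q : CQ) (z : Finset Var) (alpha : Finset Var → QAtom) : CQ where
  answerVars := q.answerVars
  existVars := q.existVars.filter (fun v => decide (∃ atm ∈ qzAtoms q z alpha, v ∈ QAtom.vars atm))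
  atoms := qzAtoms q z alpha

/- ## The BALG rewriting `q̄` -/

/-- Value of an atom of `q_z` after the rewriting step 3 (`chasing back'' with
the TBox): concept atoms `A(t)` become `⋁_{T ⊨ C ⊑ A} ζ_C(t)`, role atoms with a
`z`-variable become the corresponding truncated difference, and the remaining
atoms are evaluated as before. -/
def rewAtomVal (T : TBox) (I : BagInterp) (z : Finset Var) (f : Var → I.Δ) : QAtom → ℕ∞
  | QAtom.conceptAt A t => cclI T I (DLConcept.atomic A) (termVal I f t)
  | QAtom.roleAt P t₁ t₂ =>
      if Term.IsZVar t₂ z then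
        cclI T I (DLConcept.ex (Role.atomic P)) (termVal I f t₁)
          - I.conceptMult (DLConcept.ex (Role.atomic P)) (termVal I f t₁)
      else if Term.IsZVar t₁ z then
        cclI T I (DLConcept.ex (Role.inv P)) (termVal I f t₂)
          - I.conceptMult (DLConcept.ex (Role.inv P)) (termVal I f t₂)
      else I.rI P (termVal I f t₁) (termVal I f t₂)
  | QAtom.eqAt v t => if f v = termVal I f t then 1 else 0

/-- Bag answers of the BALG query `q̄_z`, obtained from `q_z` by projecting only
the variables of `y' ∖ z` and replacing atoms as in `rewAtomVal`. -/
def rewAnswer (T : TBox) (qq : CQ) (z : Finset Var) (I : BagInterp) (a : List Ind) : ℕ∞ :=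
  bagSum (fun f : {f : Var → I.Δ //
      (∀ v, v ∉ qq.answerVars ++ qq.existVars.filter (fun u => decide (u ∉ z)) →
        f v = I.indMap 0) ∧
      qq.answerVars.map f = a.map I.indMap} =>
    (qq.atoms.map (rewAtomVal T I z f.1)).prod)

/- ## BALG¹_ε queries -/

def Term.fvars (t : Term) : Finset Var :=
  match t with
  | Term.var v => {v}
  | Term.ind _ => ∅

/-- Syntax of BALG¹_ε queries. -/
inductive BQuery where
  | atomC : AtomicConcept → Term → BQuery
  | atomR : AtomicRole → Term → Term → BQuery
  | conj : BQuery → BQuery → BQuery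
  | eqSel : BQuery → Var → Term → BQuery
  | proj : List Var → BQuery → BQuery
  | maxU : BQuery → BQuery → BQuery
  | arithU : BQuery → BQuery → BQuery
  | diff : BQuery → BQuery → BQuery

/-- Answer variables of a BALG¹_ε query. -/
def BQuery.fv : BQuery → Finset Var
  | BQuery.atomC _ t => t.fvars
  | BQuery.atomR _ t₁ t₂ => t₁.fvars ∪ t₂.fvars
  | BQuery.conj q₁ q₂ => q₁.fv ∪ q₂.fv
  | BQuery.eqSel q _ t => q.fv ∪ t.fvars
  | BQuery.proj ys q => q.fv \ ys.toFinset
  | BQuery.maxU q₁ _ => q₁.fv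
  | BQuery.arithU q₁ _ => q₁.fv
  | BQuery.diff q₁ _ => q₁.fv

/-- Well-formedness of BALG¹_ε queries. -/
def BQuery.WF : BQuery → Prop
  | BQuery.atomC _ _ => True
  | BQuery.atomR _ _ _ => True
  | BQuery.conj q₁ q₂ => q₁.WF ∧ q₂.WF
  | BQuery.eqSel q x _ => q.WF ∧ x ∈ q.fv
  | BQuery.proj _ q => q.WF
  | BQuery.maxU q₁ q₂ => q₁.WF ∧ q₂.WF ∧ q₁.fv = q₂.fv
  | BQuery.arithU q₁ q₂ => q₁.WF ∧ q₂.WF ∧ q₁.fv = q₂.fv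
  | BQuery.diff q₁ q₂ => q₁.WF ∧ q₂.WF ∧ q₁.fv = q₂.fv

/-- Semantics of BALG¹_ε queries under a valuation of the answer variables. -/
def BQuery.val (I : BagInterp) : BQuery → (Var → I.Δ) → ℕ∞
  | BQuery.atomC A t, f => I.cI A (termVal I f t)
  | BQuery.atomR P t₁ t₂, f => I.rI P (termVal I f t₁) (termVal I f t₂)
  | BQuery.conj q₁ q₂, f => q₁.val I f * q₂.val I f
  | BQuery.eqSel q x t, f => if f x = termVal I f t then q.val I f else 0
  | BQuery.proj ys q, f => bagSum (fun g : {g : Var → I.Δ // ∀ v, v ∉ ys → g v = f v} => q.val I g.1)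
  | BQuery.maxU q₁ q₂, f => max (q₁.val I f) (q₂.val I f)
  | BQuery.arithU q₁ q₂, f => q₁.val I f + q₂.val I f
  | BQuery.diff q₁ q₂, f => q₁.val I f - q₂.val I f

/-- Bag answers of a BALG¹_ε query with answer variables `xs` on a tuple `a`. -/
def BQuery.answer (Q : BQuery) (xs : List Var) (I : BagInterp) (a : List Ind) : ℕ∞ :=
  if a.length = xs.length then Q.val I (fun v => I.indMap (a.getD (xs.idxOf v) 0)) else 0

/- ## Enumerated bags, e-homomorphisms, and e-valuations -/

/-- Enumerated copies of a bag of domain elements (for an atomic concept). -/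
def EBagC (I : BagInterp) (A : AtomicConcept) : Type :=
  {p : I.Δ × ℕ // 1 ≤ p.2 ∧ (p.2 : ℕ∞) ≤ I.cI A p.1}

/-- Enumerated copies of a bag of pairs (for an atomic role). -/
def EBagR (I : BagInterp) (P : AtomicRole) : Type :=
  {p : (I.Δ × I.Δ) × ℕ // 1 ≤ p.2 ∧ (p.2 : ℕ∞) ≤ I.rI P p.1.1 p.1.2}

/-- An e-homomorphism between the enumerated versions of two bag interpretations. -/
structure EHom (I J : BagInterp) where
  h : I.Δ → J.Δ
  hInd : ∀ a : Ind, h (I.indMap a) = J.indMap a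
  hC : ∀ A : AtomicConcept, EBagC I A → EBagC J A
  hC_fst : ∀ (A : AtomicConcept) (x : EBagC I A), (hC A x).1.1 = h x.1.1
  hR : ∀ P : AtomicRole, EBagR I P → EBagR J P
  hR_fst : ∀ (P : AtomicRole) (x : EBagR I P), (hR P x).1.1 = (h x.1.1.1, h x.1.1.2)

/-- Predicate-injectivity on individuals of an e-homomorphism. -/
def EHom.PredInj {I J : BagInterp} (e : EHom I J) : Prop :=
  ∀ u : I.Δ, (∃ a : Ind, e.h u = J.indMap a) →
    (∀ A : AtomicConcept, ∀ x y : EBagC I A,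
      x.1.1 = u → y.1.1 = u → x.1.2 ≠ y.1.2 → e.hC A x ≠ e.hC A y) ∧
    (∀ P : AtomicRole, ∀ x y : EBagR I P, x.1.1.1 = u → y.1.1.1 = u →
      (x.1.1.2, x.1.2) ≠ (y.1.1.2, y.1.2) → e.hR P x ≠ e.hR P y) ∧
    (∀ P : AtomicRole, ∀ x y : EBagR I P, x.1.1.2 = u → y.1.1.2 = u →
      (x.1.1.1, x.1.2) ≠ (y.1.1.1, y.1.2) → e.hR P x ≠ e.hR P y)

/-- Enumerated atoms of a CQ (seen as a bag of atoms). -/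
def EAtom (q : CQ) : Type := {p : QAtom × ℕ // 1 ≤ p.2 ∧ p.2 ≤ q.atoms.count p.1}

/-- An e-valuation of the enumerated query `q^e` over the enumerated
interpretation `I^e`. -/
structure EVal (q : CQ) (I : BagInterp) where
  ν : Var → I.Δ
  hjunk : ∀ v, v ∉ q.vars → ν v = I.indMap 0
  heq : ∀ z t, QAtom.eqAt z t ∈ q.atoms → ν z = termVal I ν t
  ℓ : EAtom q → ℕ
  hone : ∀ e : EAtom q, 1 ≤ ℓ e
  hconcept : ∀ (e : EAtom q) (A : AtomicConcept) (t : Term),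
    e.1.1 = QAtom.conceptAt A t → (ℓ e : ℕ∞) ≤ I.cI A (termVal I ν t)
  hrole : ∀ (e : EAtom q) (P : AtomicRole) (t₁ t₂ : Term),
    e.1.1 = QAtom.roleAt P t₁ t₂ → (ℓ e : ℕ∞) ≤ I.rI P (termVal I ν t₁) (termVal I ν t₂)
  heqm : ∀ (e : EAtom q) (z : Var) (t : Term), e.1.1 = QAtom.eqAt z t → ℓ e = 1

/-- The tuple of domain elements to which an e-atom is sent by an e-valuation. -/
def EVal.imgTerms {q : CQ} {I : BagInterp} (ev : EVal q I) (e : EAtom q) : List I.Δ :=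
  (QAtom.terms e.1.1).map (termVal I ev.ν)

/-- The enumerated image of an e-atom under an e-valuation. -/
def EVal.img {q : CQ} {I : BagInterp} (ev : EVal q I) (e : EAtom q) : List I.Δ × ℕ :=
  (ev.imgTerms e, ev.ℓ e)

/- ## Auxiliary concrete queries -/

/-- The CQ `ζ_C(x)`: `A(x)`, `∃y.P(x,y)` or `∃y.P(y,x)`. -/
def zetaCQ : DLConcept → CQ
  | DLConcept.atomic A => ⟨[0], [], [QAtom.conceptAt A (Term.var 0)]⟩
  | DLConcept.ex (Role.atomic P) => ⟨[0], [1], [QAtom.roleAt P (Term.var 0) (Term.var 1)]⟩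
  | DLConcept.ex (Role.inv P) => ⟨[0], [1], [QAtom.roleAt P (Term.var 1) (Term.var 0)]⟩

/-- The CQ `q(x) = R(x,x)`. -/
def selfCQ (P : AtomicRole) : CQ := ⟨[0], [], [QAtom.roleAt P (Term.var 0) (Term.var 0)]⟩


/- ## Auxiliary lemmas for Statement 11 -/

section Stmt11Aux

open CanElem

/-! ### bagSum lemmas -/

lemma le_bagSumF {α : Type*} (f : α → ℕ∞) (s : Finset α) : ∑ y ∈ s, f y ≤ bagSum f :=
  le_iSup (fun s : Finset α => ∑ y ∈ s, f y) s

lemma le_bagSum {α : Type*} (f : α → ℕ∞) (x : α) : f x ≤ bagSum f := by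
  have : ∑ y ∈ ({x} : Finset α), f y ≤ bagSum f := le_iSup (fun s : Finset α => ∑ y ∈ s, f y) {x}
  simpa using this

lemma bagSum_eq_zero {α : Type*} {f : α → ℕ∞} : bagSum f = 0 ↔ ∀ x, f x = 0 := by
  constructor
  · intro h x
    exact le_antisymm (h ▸ le_bagSum f x) bot_le
  · intro h
    have : ∀ s : Finset α, ∑ y ∈ s, f y = 0 := by
      intro s; exact Finset.sum_eq_zero fun y _ => h y
    simp [bagSum, this]

lemma bagSum_congr {α : Type*} {f g : α → ℕ∞} (h : ∀ x, f x = g x) : bagSum f = bagSum g := by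
  have : f = g := funext h
  rw [this]

lemma bagSum_add {α : Type*} (f g : α → ℕ∞) :
    bagSum (fun x => f x + g x) = bagSum f + bagSum g := by
  unfold bagSum
  have h1 : ∀ s : Finset α, ∑ x ∈ s, (f x + g x) = (∑ x ∈ s, f x) + ∑ x ∈ s, g x := by
    intro s; exact Finset.sum_add_distrib
  rw [iSup_congr h1]
  exact (ENat.iSup_add_iSup_of_monotone (f := fun s : Finset α => ∑ x ∈ s, f x)
    (g := fun s : Finset α => ∑ x ∈ s, g x)
    (fun s t hst => Finset.sum_le_sum_of_subset hst)
    (fun s t hst => Finset.sum_le_sum_of_subset hst)).symm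

lemma bagSum_point {α : Type*} (p : α) (c : ℕ∞) [inst : ∀ x : α, Decidable (x = p)] :
    bagSum (fun x => if x = p then c else 0) = c := by
  apply le_antisymm
  · apply iSup_le
    intro s
    rw [← Finset.sum_filter]
    have hsub : s.filter (fun x => x = p) ⊆ {p} := by
      intro x hx
      rw [Finset.mem_filter] at hx
      simp [hx.2]
    calc ∑ _x ∈ s.filter (fun x => x = p), c ≤ ∑ _x ∈ ({p} : Finset α), c :=
          Finset.sum_le_sum_of_subset hsub
      _ = c := by simp
  · have := le_bagSum (fun x => if x = p then c else 0) p
    simpa using this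

lemma bagSum_comp_inj {α β : Type*} (e : α → β) (he : Function.Injective e)
    (f : β → ℕ∞) (h0 : ∀ y, (∀ x, y ≠ e x) → f y = 0) :
    bagSum f = bagSum (fun x => f (e x)) := by
  classical
  apply le_antisymm
  · apply iSup_le
    intro s
    have h1 : ∑ y ∈ s.filter (fun y => y ∈ Set.range e), f y = ∑ y ∈ s, f y := by
      apply Finset.sum_filter_of_ne
      intro y _ hy
      by_contra hr
      exact hy (h0 y (fun x hx => hr ⟨x, hx.symm⟩))
    have h2 : s.filter (fun y => y ∈ Set.range e) = (s.preimage e he.injOn).image e := by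
      rw [Finset.image_preimage]
    rw [← h1, h2, Finset.sum_image (fun a _ b _ hab => he hab)]
    exact le_bagSumF _ _
  · apply iSup_le
    intro t
    calc ∑ x ∈ t, f (e x) = ∑ y ∈ t.image e, f y := by
          rw [Finset.sum_image (fun a _ b _ hab => he hab)]
      _ ≤ bagSum f := le_bagSumF f _

end Stmt11Aux

section Stmt11Can

open CanElem

/-! ### CanElem structure -/

def cDepth : CanElem → ℕ
  | .ind _ => 0
  | .anon u _ _ => cDepth u + 1

inductive Below (w₀ : CanElem) : CanElem → Prop
  | base : Below w₀ w₀
  | step {u : CanElem} (R : Role) (j : ℕ) : Below w₀ u → Below w₀ (CanElem.anon u R j)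

def relabel (w₀ : CanElem) (b : Ind) : CanElem → CanElem
  | .ind a => if CanElem.ind a = w₀ then .ind b else .ind a
  | .anon u R j => if CanElem.anon u R j = w₀ then .ind b else .anon (relabel w₀ b u) R j

lemma relabel_self (w₀ : CanElem) (b : Ind) : relabel w₀ b w₀ = .ind b := by
  cases w₀ <;> simp [relabel]

lemma relabel_anon {w₀ : CanElem} (b : Ind) {u : CanElem} {R : Role} {j : ℕ}
    (h : CanElem.anon u R j ≠ w₀) :
    relabel w₀ b (.anon u R j) = .anon (relabel w₀ b u) R j := by
  simp [relabel, h]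

lemma below_depth {w₀ x : CanElem} (h : Below w₀ x) : cDepth w₀ ≤ cDepth x := by
  induction h with
  | base => exact le_refl _
  | step R j _ ih => simp only [cDepth]; omega

lemma below_anon {p : CanElem} {R : Role} {j : ℕ} {x : CanElem}
    (h : Below (CanElem.anon p R j) x) : ∃ u R' j', x = CanElem.anon u R' j' := by
  induction h with
  | base => exact ⟨p, R, j, rfl⟩
  | step R' j' _ _ => exact ⟨_, R', j', rfl⟩

def top1 : CanElem → CanElem
  | .ind a => .ind a
  | .anon (.ind c) R j => .anon (.ind c) R j
  | .anon (.anon u R' j') R j => top1 (.anon u R' j')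

lemma top1_anon_of_anon {u : CanElem} {R : Role} {j : ℕ} (hu : ∃ v R' j', u = CanElem.anon v R' j') :
    top1 (.anon u R j) = top1 u := by
  obtain ⟨v, R', j', rfl⟩ := hu
  rfl

lemma below_of_top1 {c : Ind} {R₀ : Role} {j₀ : ℕ} :
    ∀ x : CanElem, x.isAnon → top1 x = CanElem.anon (.ind c) R₀ j₀ →
      Below (CanElem.anon (.ind c) R₀ j₀) x := by
  intro x
  induction x with
  | ind a => intro h; exact absurd h (by simp [CanElem.isAnon])
  | anon u R j ih =>
    intro _ htop
    cases u with
    | ind c' =>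
      have : CanElem.anon (.ind c') R j = CanElem.anon (.ind c) R₀ j₀ := htop
      rw [this]; exact Below.base
    | anon v R' j' =>
      have h1 : top1 (CanElem.anon (.anon v R' j') R j) = top1 (.anon v R' j') := rfl
      have := ih (by simp [CanElem.isAnon]) (h1 ▸ htop)
      exact Below.step R j this

/-! ### canStage structure -/

variable {K : Ontology}

lemma act_le_succ (i : ℕ) : (canStage K i).active ⊆ (canStage K (i+1)).active := by
  intro w hw
  exact Set.mem_union_left _ hw

lemma act_mono {i j : ℕ} (h : i ≤ j) : (canStage K i).active ⊆ (canStage K j).active := by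
  induction j, h using Nat.le_induction with
  | base => exact subset_rfl
  | succ j _ ih => exact ih.trans (act_le_succ j)

lemma ind_act (a : Ind) (i : ℕ) : CanElem.ind a ∈ (canStage K i).active := by
  induction i with
  | zero => exact ⟨a, rfl⟩
  | succ i ih => exact Set.mem_union_left _ ih

lemma anon_act_parent {i : ℕ} {u : CanElem} {R : Role} {j : ℕ}
    (h : CanElem.anon u R j ∈ (canStage K i).active) :
    ∃ i' < i, u ∈ (canStage K i').active := by
  induction i with
  | zero => obtain ⟨a, ha⟩ := h; exact absurd ha (by simp)
  | succ i ih =>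
    rcases h with h | h
    · obtain ⟨i', hi', hu⟩ := ih h
      exact ⟨i', by omega, hu⟩
    · obtain ⟨u', R', j', heq, hu', _⟩ := h
      rw [CanElem.anon.injEq] at heq
      exact ⟨i, by omega, heq.1 ▸ hu'⟩

lemma c_act {i : ℕ} {A : AtomicConcept} {u : CanElem}
    (h : (canStage K i).c A u ≠ 0) : u ∈ (canStage K i).active := by
  cases i with
  | zero =>
    cases u with
    | ind a => exact ⟨a, rfl⟩
    | anon v R j => exact absurd rfl h
  | succ i =>
    by_cases hu : u ∈ (canStage K i).active
    · exact act_le_succ i hu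
    · exact absurd (if_neg hu) h

lemma entails_refl (T : TBox) (C : DLConcept) : TBox.EntailsCI T C C :=
  fun _ _ => subset_rfl

lemma le_cclI {T : TBox} {I : BagInterp} {C : DLConcept} {u : I.Δ}
    (C₀ : DLConcept) (h : TBox.EntailsCI T C₀ C) : I.conceptMult C₀ u ≤ cclI T I C u :=
  le_iSup (fun x : {C₀ : DLConcept // TBox.EntailsCI T C₀ C} => I.conceptMult x.1 u) ⟨C₀, h⟩

lemma c_mono (i : ℕ) (A : AtomicConcept) (u : CanElem) :
    (canStage K i).c A u ≤ (canStage K (i+1)).c A u := by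
  by_cases hu : u ∈ (canStage K i).active
  · show (canStage K i).c A u ≤ if u ∈ (canStage K i).active then _ else 0
    rw [if_pos hu]
    exact le_cclI (DLConcept.atomic A) (entails_refl _ _)
  · have : (canStage K i).c A u = 0 := by
      by_contra h; exact hu (c_act h)
    simp [this]

lemma c_mono_le {i j : ℕ} (h : i ≤ j) (A : AtomicConcept) (u : CanElem) :
    (canStage K i).c A u ≤ (canStage K j).c A u := by
  induction j, h using Nat.le_induction with
  | base => exact le_refl _
  | succ j _ ih => exact ih.trans (c_mono j A u)

end Stmt11Can

section Stmt11R

open CanElem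

variable {K : Ontology}

lemma r_ind (i : ℕ) (P : AtomicRole) (a b : Ind) :
    (canStage K i).r P (.ind a) (.ind b) = K.abox.mult (Assertion.roleA P a b) := by
  induction i with
  | zero => rfl
  | succ i ih =>
    show (if _ ∧ _ then _ else _) = _
    rw [if_pos ⟨ind_act a i, ind_act b i⟩, ih]

lemma depth_ne₁ {u : CanElem} {R : Role} {j : ℕ} : u ≠ CanElem.anon u R j := by
  intro h
  have := congrArg cDepth h
  simp only [cDepth] at this; omega

lemma depth_ne₂ {u v : CanElem} {R R' : Role} {j j' : ℕ} :
    ¬(u = CanElem.anon v R j ∧ v = CanElem.anon u R' j') := by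
  rintro ⟨h1, h2⟩
  rw [h2] at h1
  have := congrArg cDepth h1
  simp only [cDepth] at this; omega

lemma r_child (i : ℕ) (P : AtomicRole) (u : CanElem) (j : ℕ) :
    (canStage K i).r P u (.anon u (Role.atomic P) j)
      = if CanElem.anon u (Role.atomic P) j ∈ (canStage K i).active then 1 else 0 := by
  induction i with
  | zero =>
    have hact : CanElem.anon u (Role.atomic P) j ∉ (canStage K 0).active := by
      rintro ⟨a, ha⟩; exact absurd ha (by simp)
    rw [if_neg hact]
    cases u <;> rfl
  | succ i ih =>
    show (if _ ∧ _ then _ else _) = _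
    by_cases h1 : u ∈ (canStage K i).active ∧
        CanElem.anon u (Role.atomic P) j ∈ (canStage K i).active
    · rw [if_pos h1, ih, if_pos h1.2, if_pos (act_le_succ i h1.2)]
    · rw [if_neg h1]
      by_cases h2 : (canStage K i).NewAnon K.tbox (.anon u (Role.atomic P) j)
      · rw [if_pos (⟨j, rfl, h2⟩ : ∃ j', CanElem.anon u (Role.atomic P) j
            = CanElem.anon u (Role.atomic P) j' ∧ (canStage K i).NewAnon K.tbox (.anon u (Role.atomic P) j))]
        have hmem : CanElem.anon u (Role.atomic P) j ∈ (canStage K (i+1)).active :=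
          Set.mem_union_right _ h2
        rw [if_pos hmem]
      · have hc2 : ¬ ∃ j', CanElem.anon u (Role.atomic P) j = CanElem.anon u (Role.atomic P) j'
            ∧ (canStage K i).NewAnon K.tbox (.anon u (Role.atomic P) j) := by
          rintro ⟨j', _, hn⟩; exact h2 hn
        rw [if_neg hc2]
        have hc3 : ¬ ∃ j', u = CanElem.anon (.anon u (Role.atomic P) j) (Role.inv P) j'
            ∧ (canStage K i).NewAnon K.tbox u := by
          rintro ⟨j', h, _⟩
          exact depth_ne₂ ⟨h, rfl⟩
        rw [if_neg hc3]
        have hact : CanElem.anon u (Role.atomic P) j ∉ (canStage K (i+1)).active := by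
          rintro (h | h)
          · obtain ⟨i', hi', hu⟩ := anon_act_parent h
            exact h1 ⟨act_mono (by omega) hu, h⟩
          · obtain ⟨u', R', j', heq, hu', hd⟩ := h
            rw [CanElem.anon.injEq] at heq
            refine h2 ⟨u', R', j', ?_, hu', hd⟩
            rw [CanElem.anon.injEq]
            exact heq
        rw [if_neg hact]

lemma r_childinv (i : ℕ) (P : AtomicRole) (u : CanElem) (j : ℕ) :
    (canStage K i).r P (.anon u (Role.inv P) j) u
      = if CanElem.anon u (Role.inv P) j ∈ (canStage K i).active then 1 else 0 := by
  induction i with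
  | zero =>
    have hact : CanElem.anon u (Role.inv P) j ∉ (canStage K 0).active := by
      rintro ⟨a, ha⟩; exact absurd ha (by simp)
    rw [if_neg hact]
    cases u <;> rfl
  | succ i ih =>
    show (if _ ∧ _ then _ else _) = _
    by_cases h1 : CanElem.anon u (Role.inv P) j ∈ (canStage K i).active ∧
        u ∈ (canStage K i).active
    · rw [if_pos h1, ih, if_pos h1.1, if_pos (act_le_succ i h1.1)]
    · rw [if_neg h1]
      have hc2 : ¬ ∃ j', u = CanElem.anon (.anon u (Role.inv P) j) (Role.atomic P) j'
          ∧ (canStage K i).NewAnon K.tbox u := by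
        rintro ⟨j', h, _⟩
        exact depth_ne₂ ⟨h, rfl⟩
      rw [if_neg hc2]
      by_cases h2 : (canStage K i).NewAnon K.tbox (.anon u (Role.inv P) j)
      · rw [if_pos (⟨j, rfl, h2⟩ : ∃ j', CanElem.anon u (Role.inv P) j
            = CanElem.anon u (Role.inv P) j' ∧ (canStage K i).NewAnon K.tbox (.anon u (Role.inv P) j))]
        have hmem : CanElem.anon u (Role.inv P) j ∈ (canStage K (i+1)).active :=
          Set.mem_union_right _ h2
        rw [if_pos hmem]
      · have hc3 : ¬ ∃ j', CanElem.anon u (Role.inv P) j = CanElem.anon u (Role.inv P) j'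
            ∧ (canStage K i).NewAnon K.tbox (.anon u (Role.inv P) j) := by
          rintro ⟨j', _, hn⟩; exact h2 hn
        rw [if_neg hc3]
        have hact : CanElem.anon u (Role.inv P) j ∉ (canStage K (i+1)).active := by
          rintro (h | h)
          · obtain ⟨i', hi', hu⟩ := anon_act_parent h
            exact h1 ⟨h, act_mono (by omega) hu⟩
          · obtain ⟨u', R', j', heq, hu', hd⟩ := h
            rw [CanElem.anon.injEq] at heq
            refine h2 ⟨u', R', j', ?_, hu', hd⟩
            rw [CanElem.anon.injEq]
            exact heq
        rw [if_neg hact]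

lemma r_zero (i : ℕ) (P : AtomicRole) (x y : CanElem)
    (h1 : ¬ ∃ a b, x = CanElem.ind a ∧ y = CanElem.ind b)
    (h2 : ∀ j, y ≠ CanElem.anon x (Role.atomic P) j)
    (h3 : ∀ j, x ≠ CanElem.anon y (Role.inv P) j) :
    (canStage K i).r P x y = 0 := by
  induction i with
  | zero =>
    cases x with
    | ind a =>
      cases y with
      | ind b => exact absurd ⟨a, b, rfl, rfl⟩ h1
      | anon => rfl
    | anon => cases y <;> rfl
  | succ i ih =>
    show (if _ ∧ _ then _ else _) = _
    by_cases hb : x ∈ (canStage K i).active ∧ y ∈ (canStage K i).active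
    · rw [if_pos hb, ih]
    · rw [if_neg hb, if_neg, if_neg]
      · rintro ⟨j, hj, _⟩; exact h3 j hj
      · rintro ⟨j, hj, _⟩; exact h2 j hj

lemma r_mono (i : ℕ) (P : AtomicRole) (x y : CanElem) :
    (canStage K i).r P x y ≤ (canStage K (i+1)).r P x y := by
  by_cases hii : ∃ a b, x = CanElem.ind a ∧ y = CanElem.ind b
  · obtain ⟨a, b, rfl, rfl⟩ := hii
    rw [r_ind, r_ind]
  · by_cases hch : ∃ j, y = CanElem.anon x (Role.atomic P) j
    · obtain ⟨j, rfl⟩ := hch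
      rw [r_child, r_child]
      split
      · rw [if_pos (act_le_succ i (by assumption))]
      · exact zero_le
    · by_cases hci : ∃ j, x = CanElem.anon y (Role.inv P) j
      · obtain ⟨j, rfl⟩ := hci
        rw [r_childinv, r_childinv]
        split
        · rw [if_pos (act_le_succ i (by assumption))]
        · exact zero_le
      · rw [r_zero i P x y hii (by push_neg at hch; exact hch) (by push_neg at hci; exact hci),
            r_zero (i+1) P x y hii (by push_neg at hch; exact hch) (by push_neg at hci; exact hci)]

lemma r_mono_le {i j : ℕ} (h : i ≤ j) (P : AtomicRole) (x y : CanElem) :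
    (canStage K i).r P x y ≤ (canStage K j).r P x y := by
  induction j, h using Nat.le_induction with
  | base => exact le_refl _
  | succ j _ ih => exact ih.trans (r_mono j P x y)

end Stmt11R

section Stmt11CanI

open CanElem

variable {K : Ontology}

def actW (K : Ontology) (w : CanElem) : Prop := ∃ i, w ∈ (canStage K i).active

lemma iSup_ite_one {p : ℕ → Prop} :
    (⨆ i, if p i then (1 : ℕ∞) else 0) = if ∃ i, p i then 1 else 0 := by
  by_cases h : ∃ i, p i
  · rw [if_pos h]
    obtain ⟨i, hi⟩ := h
    apply le_antisymm
    · exact iSup_le fun j => by split <;> simp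
    · calc (1 : ℕ∞) = if p i then 1 else 0 := (if_pos hi).symm
        _ ≤ _ := le_iSup (fun i => if p i then (1:ℕ∞) else 0) i
  · rw [if_neg h]
    push_neg at h
    simp [h]

lemma can_r_ind (P : AtomicRole) (a b : Ind) :
    (canInterp K).rI P (.ind a) (.ind b) = K.abox.mult (Assertion.roleA P a b) := by
  show (⨆ i, (canStage K i).r P (.ind a) (.ind b)) = _
  rw [iSup_congr (fun i => r_ind i P a b)]
  exact iSup_const

lemma can_r_child (P : AtomicRole) (u : CanElem) (j : ℕ) :
    (canInterp K).rI P u (.anon u (Role.atomic P) j)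
      = if actW K (.anon u (Role.atomic P) j) then 1 else 0 := by
  show (⨆ i, (canStage K i).r P u (.anon u (Role.atomic P) j)) = _
  rw [iSup_congr (fun i => r_child i P u j)]
  exact iSup_ite_one

lemma can_r_childinv (P : AtomicRole) (u : CanElem) (j : ℕ) :
    (canInterp K).rI P (.anon u (Role.inv P) j) u
      = if actW K (.anon u (Role.inv P) j) then 1 else 0 := by
  show (⨆ i, (canStage K i).r P (.anon u (Role.inv P) j) u) = _
  rw [iSup_congr (fun i => r_childinv i P u j)]
  exact iSup_ite_one

lemma can_r_zero (P : AtomicRole) (x y : CanElem)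
    (h1 : ¬ ∃ a b, x = CanElem.ind a ∧ y = CanElem.ind b)
    (h2 : ∀ j, y ≠ CanElem.anon x (Role.atomic P) j)
    (h3 : ∀ j, x ≠ CanElem.anon y (Role.inv P) j) :
    (canInterp K).rI P x y = 0 := by
  show (⨆ i, (canStage K i).r P x y) = _
  rw [iSup_congr (fun i => r_zero i P x y h1 h2 h3)]
  exact iSup_const

lemma can_edge_cases {P : AtomicRole} {x y : CanElem}
    (h : (canInterp K).rI P x y ≠ 0) :
    (∃ a b, x = CanElem.ind a ∧ y = CanElem.ind b) ∨
    (∃ j, y = CanElem.anon x (Role.atomic P) j ∧ actW K y) ∨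
    (∃ j, x = CanElem.anon y (Role.inv P) j ∧ actW K x) := by
  by_cases h1 : ∃ a b, x = CanElem.ind a ∧ y = CanElem.ind b
  · exact Or.inl h1
  by_cases h2 : ∃ j, y = CanElem.anon x (Role.atomic P) j
  · obtain ⟨j, rfl⟩ := h2
    rw [can_r_child] at h
    refine Or.inr (Or.inl ⟨j, rfl, ?_⟩)
    by_contra hw
    rw [if_neg hw] at h
    exact h rfl
  by_cases h3 : ∃ j, x = CanElem.anon y (Role.inv P) j
  · obtain ⟨j, rfl⟩ := h3
    rw [can_r_childinv] at h
    refine Or.inr (Or.inr ⟨j, rfl, ?_⟩)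
    by_contra hw
    rw [if_neg hw] at h
    exact h rfl
  · exact absurd (can_r_zero P x y h1 (by push_neg at h2; exact h2) (by push_neg at h3; exact h3)) h

lemma can_c_eq (A : AtomicConcept) (u : CanElem) :
    (canInterp K).cI A u = ⨆ i, (canStage K i).c A u := rfl

lemma iSup_shift (f : ℕ → ℕ∞) (hmono : ∀ i j, i ≤ j → f i ≤ f j) (i₀ : ℕ) :
    ⨆ i, f i = ⨆ k, f (i₀ + k) := by
  apply le_antisymm
  · exact iSup_le fun i => le_trans (hmono i (i₀ + i) (by omega)) (le_iSup (fun k => f (i₀ + k)) i)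
  · exact iSup_le fun k => le_iSup f (i₀ + k)

end Stmt11CanI

section Stmt11CM

open CanElem

def invRole : Role → Role
  | .atomic P => .inv P
  | .inv P => .atomic P

def pbit (R Rp : Role) : ℕ∞ := if R = invRole Rp then 1 else 0

def assertVal (K : Ontology) (R : Role) (d e : Ind) : ℕ∞ :=
  match R with
  | .atomic Q => K.abox.mult (Assertion.roleA Q d e)
  | .inv Q => K.abox.mult (Assertion.roleA Q e d)

variable {K : Ontology}

lemma cm_anon {i : ℕ} {u : CanElem} {Rp : Role} {jp : ℕ}
    (hact : CanElem.anon u Rp jp ∈ (canStage K i).active) (R : Role) :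
    (canStage K i).toInterp.conceptMult (DLConcept.ex R) (.anon u Rp jp)
      = pbit R Rp + bagSum (fun n : ℕ =>
          if CanElem.anon (.anon u Rp jp) R n ∈ (canStage K i).active then 1 else 0) := by
  classical
  set w := CanElem.anon u Rp jp with hw
  have key : ∀ v : CanElem, (canStage K i).toInterp.roleMult R w v
      = (if v = u then pbit R Rp else 0)
        + (if ∃ n, v = CanElem.anon w R n ∧ v ∈ (canStage K i).active then 1 else 0) := by
    intro v
    by_cases hvu : v = u
    · subst hvu
      have h2zero : ¬ ∃ n, v = CanElem.anon w R n ∧ v ∈ (canStage K i).active := by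
        rintro ⟨n, hn, -⟩; exact depth_ne₂ ⟨hn, hw⟩
      rw [if_pos rfl, if_neg h2zero, add_zero]
      cases R with
      | atomic Q =>
        show (canStage K i).r Q w v = _
        by_cases hR : Rp = Role.inv Q
        · subst hR
          rw [hw, r_childinv i Q v jp, if_pos (hw ▸ hact)]
          simp [pbit, invRole]
        · have hz1 : ¬ ∃ a b, w = CanElem.ind a ∧ v = CanElem.ind b := by
            rintro ⟨a, b, hab, -⟩; rw [hw] at hab; exact absurd hab (by simp)
          have hz2 : ∀ j, v ≠ CanElem.anon w (Role.atomic Q) j :=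
            fun j hj => depth_ne₂ ⟨hj, hw⟩
          have hz3 : ∀ j, w ≠ CanElem.anon v (Role.inv Q) j := by
            intro j hj; rw [hw, CanElem.anon.injEq] at hj; exact hR hj.2.1
          rw [r_zero i Q w v hz1 hz2 hz3]
          cases Rp with
          | atomic Q' => simp [pbit, invRole]
          | inv Q' =>
            have hne : Q ≠ Q' := fun h => hR (by rw [h])
            simp [pbit, invRole, hne]
      | inv Q =>
        show (canStage K i).r Q v w = _
        by_cases hR : Rp = Role.atomic Q
        · subst hR
          rw [hw, r_child i Q v jp, if_pos (hw ▸ hact)]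
          simp [pbit, invRole]
        · have hz1 : ¬ ∃ a b, v = CanElem.ind a ∧ w = CanElem.ind b := by
            rintro ⟨a, b, -, hab⟩; rw [hw] at hab; exact absurd hab (by simp)
          have hz2 : ∀ j, w ≠ CanElem.anon v (Role.atomic Q) j := by
            intro j hj; rw [hw, CanElem.anon.injEq] at hj; exact hR hj.2.1
          have hz3 : ∀ j, v ≠ CanElem.anon w (Role.inv Q) j :=
            fun j hj => depth_ne₂ ⟨hj, hw⟩
          rw [r_zero i Q v w hz1 hz2 hz3]
          cases Rp with
          | atomic Q' =>
            have hne : Q ≠ Q' := fun h => hR (by rw [h])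
            simp [pbit, invRole, hne]
          | inv Q' => simp [pbit, invRole]
    · rw [if_neg hvu, zero_add]
      by_cases hfam : ∃ R' n, v = CanElem.anon w R' n
      · obtain ⟨R', n, rfl⟩ := hfam
        by_cases hRR : R = R'
        · subst hRR
          cases R with
          | atomic Q =>
            show (canStage K i).r Q w _ = _
            rw [r_child i Q w n]
            by_cases hv : CanElem.anon w (Role.atomic Q) n ∈ (canStage K i).active
            · rw [if_pos hv, if_pos ⟨n, rfl, hv⟩]
            · rw [if_neg hv, if_neg]
              rintro ⟨n', hn', hv'⟩
              rw [CanElem.anon.injEq] at hn'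
              exact hv (hn'.2.2 ▸ hv')
          | inv Q =>
            show (canStage K i).r Q _ w = _
            rw [r_childinv i Q w n]
            by_cases hv : CanElem.anon w (Role.inv Q) n ∈ (canStage K i).active
            · rw [if_pos hv, if_pos ⟨n, rfl, hv⟩]
            · rw [if_neg hv, if_neg]
              rintro ⟨n', hn', hv'⟩
              rw [CanElem.anon.injEq] at hn'
              exact hv (hn'.2.2 ▸ hv')
        · have hnotm : ¬ ∃ n', CanElem.anon w R' n = CanElem.anon w R n'
              ∧ CanElem.anon w R' n ∈ (canStage K i).active := by
            rintro ⟨n', hn', -⟩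
            rw [CanElem.anon.injEq] at hn'
            exact hRR hn'.2.1.symm
          rw [if_neg hnotm]
          cases R with
          | atomic Q =>
            show (canStage K i).r Q w _ = _
            have hz1 : ¬ ∃ a b, w = CanElem.ind a ∧ CanElem.anon w R' n = CanElem.ind b := by
              rintro ⟨a, b, hab, -⟩; rw [hw] at hab; exact absurd hab (by simp)
            have hz2 : ∀ j, CanElem.anon w R' n ≠ CanElem.anon w (Role.atomic Q) j := by
              intro j hj; rw [CanElem.anon.injEq] at hj; exact hRR hj.2.1.symm
            have hz3 : ∀ j, w ≠ CanElem.anon (CanElem.anon w R' n) (Role.inv Q) j :=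
              fun j hj => depth_ne₂ ⟨hj, rfl⟩
            exact r_zero i Q w _ hz1 hz2 hz3
          | inv Q =>
            show (canStage K i).r Q _ w = _
            have hz1 : ¬ ∃ a b, CanElem.anon w R' n = CanElem.ind a ∧ w = CanElem.ind b := by
              rintro ⟨a, b, -, hab⟩; rw [hw] at hab; exact absurd hab (by simp)
            have hz2 : ∀ j, w ≠ CanElem.anon (CanElem.anon w R' n) (Role.atomic Q) j :=
              fun j hj => depth_ne₂ ⟨hj, rfl⟩
            have hz3 : ∀ j, CanElem.anon w R' n ≠ CanElem.anon w (Role.inv Q) j := by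
              intro j hj; rw [CanElem.anon.injEq] at hj; exact hRR hj.2.1.symm
            exact r_zero i Q _ w hz1 hz2 hz3
      · push_neg at hfam
        rw [if_neg (by rintro ⟨n, hn, -⟩; exact hfam R n hn)]
        cases R with
        | atomic Q =>
          show (canStage K i).r Q w v = _
          have hz1 : ¬ ∃ a b, w = CanElem.ind a ∧ v = CanElem.ind b := by
            rintro ⟨a, b, hab, -⟩; rw [hw] at hab; exact absurd hab (by simp)
          have hz3 : ∀ j, w ≠ CanElem.anon v (Role.inv Q) j := by
            intro j hj; rw [hw, CanElem.anon.injEq] at hj; exact hvu hj.1.symm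
          exact r_zero i Q w v hz1 (fun j hj => hfam (Role.atomic Q) j hj) hz3
        | inv Q =>
          show (canStage K i).r Q v w = _
          have hz1 : ¬ ∃ a b, v = CanElem.ind a ∧ w = CanElem.ind b := by
            rintro ⟨a, b, -, hab⟩; rw [hw] at hab; exact absurd hab (by simp)
          have hz2 : ∀ j, w ≠ CanElem.anon v (Role.atomic Q) j := by
            intro j hj; rw [hw, CanElem.anon.injEq] at hj; exact hvu hj.1.symm
          exact r_zero i Q v w hz1 hz2 (fun j hj => hfam (Role.inv Q) j hj)
  have hcm : (canStage K i).toInterp.conceptMult (DLConcept.ex R) w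
      = bagSum (fun v => (canStage K i).toInterp.roleMult R w v) := rfl
  erw [hcm, bagSum_congr key, bagSum_add]
  congr 1
  · exact bagSum_point u (pbit R Rp)
  · rw [bagSum_comp_inj (fun n : ℕ => CanElem.anon w R n)
      (fun n n' h => by rw [CanElem.anon.injEq] at h; exact h.2.2)
      _ (by rintro y hy; rw [if_neg]; rintro ⟨n, hn, -⟩; exact hy n hn)]
    apply bagSum_congr
    intro n
    by_cases hv : CanElem.anon w R n ∈ (canStage K i).active
    · rw [if_pos ⟨n, rfl, hv⟩, if_pos hv]
    · rw [if_neg, if_neg hv]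
      rintro ⟨n', hn', hv'⟩
      rw [CanElem.anon.injEq] at hn'
      exact hv (hn'.2.2 ▸ hv')

lemma cm_ind {i : ℕ} (d : Ind) (R : Role) :
    (canStage K i).toInterp.conceptMult (DLConcept.ex R) (.ind d)
      = bagSum (fun e : Ind => assertVal K R d e)
        + bagSum (fun n : ℕ =>
            if CanElem.anon (.ind d) R n ∈ (canStage K i).active then 1 else 0) := by
  classical
  have key : ∀ v : CanElem, (canStage K i).toInterp.roleMult R (.ind d) v
      = (match v with | .ind e => assertVal K R d e | _ => 0)
        + (if ∃ n, v = CanElem.anon (.ind d) R n ∧ v ∈ (canStage K i).active then 1 else 0) := by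
    intro v
    cases v with
    | ind e =>
      have h2 : ¬ ∃ n, CanElem.ind e = CanElem.anon (.ind d) R n
          ∧ CanElem.ind e ∈ (canStage K i).active := by
        rintro ⟨n, hn, -⟩; exact absurd hn (by simp)
      rw [if_neg h2, add_zero]
      cases R with
      | atomic Q => exact r_ind i Q d e
      | inv Q => exact r_ind i Q e d
    | anon u' R' n' =>
      show _ = 0 + _
      rw [zero_add]
      by_cases hm : u' = CanElem.ind d ∧ R' = R
      · obtain ⟨rfl, rfl⟩ := hm
        cases R' with
        | atomic Q =>
          show (canStage K i).r Q (.ind d) _ = _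
          rw [r_child i Q (.ind d) n']
          by_cases hv : CanElem.anon (.ind d) (Role.atomic Q) n' ∈ (canStage K i).active
          · rw [if_pos hv, if_pos ⟨n', rfl, hv⟩]
          · rw [if_neg hv, if_neg]
            rintro ⟨n'', hn'', hv''⟩
            rw [CanElem.anon.injEq] at hn''
            exact hv (hn''.2.2 ▸ hv'')
        | inv Q =>
          show (canStage K i).r Q _ (.ind d) = _
          rw [r_childinv i Q (.ind d) n']
          by_cases hv : CanElem.anon (.ind d) (Role.inv Q) n' ∈ (canStage K i).active
          · rw [if_pos hv, if_pos ⟨n', rfl, hv⟩]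
          · rw [if_neg hv, if_neg]
            rintro ⟨n'', hn'', hv''⟩
            rw [CanElem.anon.injEq] at hn''
            exact hv (hn''.2.2 ▸ hv'')
      · have hne : ¬ ∃ n, CanElem.anon u' R' n' = CanElem.anon (.ind d) R n
            ∧ CanElem.anon u' R' n' ∈ (canStage K i).active := by
          rintro ⟨n, hn, -⟩
          rw [CanElem.anon.injEq] at hn
          exact hm ⟨hn.1, hn.2.1⟩
        rw [if_neg hne]
        cases R with
        | atomic Q =>
          show (canStage K i).r Q (.ind d) _ = _
          have hz1 : ¬ ∃ a b, CanElem.ind d = CanElem.ind a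
              ∧ CanElem.anon u' R' n' = CanElem.ind b := by
            rintro ⟨a, b, -, hab⟩; exact absurd hab (by simp)
          have hz2 : ∀ j, CanElem.anon u' R' n' ≠ CanElem.anon (.ind d) (Role.atomic Q) j := by
            intro j hj; rw [CanElem.anon.injEq] at hj; exact hm ⟨hj.1, hj.2.1⟩
          have hz3 : ∀ j, CanElem.ind d ≠ CanElem.anon (CanElem.anon u' R' n') (Role.inv Q) j := by
            intro j hj; exact absurd hj (by simp)
          exact r_zero i Q _ _ hz1 hz2 hz3
        | inv Q =>
          show (canStage K i).r Q _ (.ind d) = _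
          have hz1 : ¬ ∃ a b, CanElem.anon u' R' n' = CanElem.ind a
              ∧ CanElem.ind d = CanElem.ind b := by
            rintro ⟨a, b, hab, -⟩; exact absurd hab (by simp)
          have hz2 : ∀ j, CanElem.ind d ≠ CanElem.anon (CanElem.anon u' R' n') (Role.atomic Q) j := by
            intro j hj; exact absurd hj (by simp)
          have hz3 : ∀ j, CanElem.anon u' R' n' ≠ CanElem.anon (.ind d) (Role.inv Q) j := by
            intro j hj; rw [CanElem.anon.injEq] at hj; exact hm ⟨hj.1, hj.2.1⟩
          exact r_zero i Q _ _ hz1 hz2 hz3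
  have hcm : (canStage K i).toInterp.conceptMult (DLConcept.ex R) (.ind d)
      = bagSum (fun v => (canStage K i).toInterp.roleMult R (.ind d) v) := rfl
  erw [hcm, bagSum_congr key, bagSum_add]
  congr 1
  · rw [bagSum_comp_inj (fun e : Ind => CanElem.ind e)
      (fun e e' h => by rwa [CanElem.ind.injEq] at h)
      _ (by rintro y hy; cases y with
            | ind e => exact absurd rfl (hy e)
            | anon => rfl)]
  · rw [bagSum_comp_inj (fun n : ℕ => CanElem.anon (.ind d) R n)
      (fun n n' h => by rw [CanElem.anon.injEq] at h; exact h.2.2)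
      _ (by rintro y hy; rw [if_neg]; rintro ⟨n, hn, -⟩; exact hy n hn)]
    apply bagSum_congr
    intro n
    by_cases hv : CanElem.anon (.ind d) R n ∈ (canStage K i).active
    · rw [if_pos ⟨n, rfl, hv⟩, if_pos hv]
    · rw [if_neg, if_neg hv]
      rintro ⟨n', hn', hv'⟩
      rw [CanElem.anon.injEq] at hn'
      exact hv (hn'.2.2 ▸ hv')

end Stmt11CM

section Stmt11Sim

open CanElem

variable {K K' : Ontology} {c0 b : Ind} {R₀ : Role} {j₀ : ℕ} {i₀ : ℕ}

lemma below_act_up {w₀ : CanElem} {u : CanElem} (hb : Below w₀ u) :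
    ∀ i, u ∈ (canStage K i).active → w₀ ∈ (canStage K i).active := by
  induction hb with
  | base => exact fun i h => h
  | step R j hu ih =>
    intro i h
    obtain ⟨i', hi', hpar⟩ := anon_act_parent h
    exact ih i (act_mono (by omega) hpar)

lemma below_child_ne_w0 {u : CanElem} (hb : Below (CanElem.anon (.ind c0) R₀ j₀) u)
    (R : Role) (j : ℕ) : CanElem.anon u R j ≠ CanElem.anon (.ind c0) R₀ j₀ := by
  intro h
  rw [CanElem.anon.injEq] at h
  obtain ⟨u', R', j', hu⟩ := below_anon hb
  rw [h.1] at hu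
  exact absurd hu (by simp)

lemma relabel_below_child {u : CanElem} (hb : Below (CanElem.anon (.ind c0) R₀ j₀) u)
    (R : Role) (j : ℕ) :
    relabel (CanElem.anon (.ind c0) R₀ j₀) b (.anon u R j)
      = .anon (relabel (CanElem.anon (.ind c0) R₀ j₀) b u) R j :=
  relabel_anon b (below_child_ne_w0 hb R j)

lemma sim
    (hmin : ∀ i' < i₀, CanElem.anon (.ind c0) R₀ j₀ ∉ (canStage K i').active)
    (hact0 : CanElem.anon (.ind c0) R₀ j₀ ∈ (canStage K i₀).active)
    (hT : K'.tbox = K.tbox)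
    (hK'c : ∀ A e, K'.abox.mult (Assertion.conceptA A e) = 0)
    (hbassert : ∀ R, bagSum (fun e : Ind => assertVal K' R b e) = pbit R R₀) :
    ∀ k : ℕ,
      (∀ w, Below (CanElem.anon (.ind c0) R₀ j₀) w →
        (w ∈ (canStage K (i₀+k)).active ↔
          relabel (CanElem.anon (.ind c0) R₀ j₀) b w ∈ (canStage K' k).active))
      ∧ (∀ w, Below (CanElem.anon (.ind c0) R₀ j₀) w → ∀ A,
          (canStage K (i₀+k)).c A w
            = (canStage K' k).c A (relabel (CanElem.anon (.ind c0) R₀ j₀) b w)) := by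
  set w₀ := CanElem.anon (.ind c0) R₀ j₀ with hw₀
  have hne0 : i₀ ≠ 0 := by
    intro h
    rw [h] at hact0
    obtain ⟨a, ha⟩ := hact0
    exact absurd ha (by simp [hw₀])
  have hbelow_only : ∀ w, Below w₀ w → w ∈ (canStage K i₀).active → w = w₀ := by
    intro w hb hact
    cases hb with
    | base => rfl
    | @step u R j hu =>
      obtain ⟨i', hi', hpar⟩ := anon_act_parent hact
      exact absurd (below_act_up hu i' hpar) (hmin i' hi')
  intro k
  induction k with
  | zero =>
    constructor
    · intro w hb
      cases hb with
      | base =>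
        refine iff_of_true hact0 ?_
        rw [relabel_self]
        exact ind_act b 0
      | @step u R j hu =>
        refine iff_of_false ?_ ?_
        · intro h
          exact below_child_ne_w0 hu R j (hbelow_only _ (Below.step R j hu) h)
        · rw [relabel_below_child hu]
          rintro ⟨a, ha⟩
          exact absurd ha (by simp)
    · intro w hb A
      cases hb with
      | base =>
        rw [relabel_self]
        have hrhs : (canStage K' 0).c A (.ind b) = K'.abox.mult (Assertion.conceptA A b) := rfl
        rw [hrhs, hK'c]
        obtain ⟨i'', rfl⟩ : ∃ i'', i₀ = i'' + 1 := ⟨i₀ - 1, by omega⟩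
        show (if w₀ ∈ (canStage K i'').active then _ else 0) = 0
        rw [if_neg (hmin i'' (by omega))]
      | @step u R j hu =>
        have hzero : (canStage K (i₀+0)).c A (.anon u R j) = 0 := by
          by_contra h
          exact below_child_ne_w0 hu R j (hbelow_only _ (Below.step R j hu) (c_act h))
        rw [hzero, relabel_below_child hu]
        rfl
  | succ k ih =>
    -- conceptMult equality at stage k
    have hconc : ∀ w, Below w₀ w → w ∈ (canStage K (i₀+k)).active → ∀ C,
        (canStage K (i₀+k)).toInterp.conceptMult C w
          = (canStage K' k).toInterp.conceptMult C (relabel w₀ b w) := by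
      intro w hb hwact C
      have hwact' : relabel w₀ b w ∈ (canStage K' k).active := (ih.1 w hb).mp hwact
      cases C with
      | atomic A => exact ih.2 w hb A
      | ex R =>
        cases hb with
        | base =>
          rw [relabel_self]
          rw [cm_anon hwact R, cm_ind b R, hbassert R]
          congr 1
          apply bagSum_congr
          intro n
          have hbc : Below w₀ (CanElem.anon w₀ R n) := Below.step R n Below.base
          have := (ih.1 _ hbc)
          rw [relabel_below_child Below.base, relabel_self] at this
          by_cases hmem : CanElem.anon w₀ R n ∈ (canStage K (i₀+k)).active
          · rw [if_pos hmem, if_pos (this.mp hmem)]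
          · rw [if_neg hmem, if_neg (fun h => hmem (this.mpr h))]
        | @step u R' j' hu =>
          rw [relabel_below_child hu]
          rw [cm_anon hwact R]
          have hwact'' : CanElem.anon (relabel w₀ b u) R' j' ∈ (canStage K' k).active := by
            rw [← relabel_below_child hu]; exact hwact'
          rw [cm_anon hwact'' R]
          congr 1
          apply bagSum_congr
          intro n
          have hbc : Below w₀ (CanElem.anon (CanElem.anon u R' j') R n) := Below.step R n (Below.step R' j' hu)
          have := ih.1 _ hbc
          rw [relabel_below_child (Below.step R' j' hu), relabel_below_child hu] at this
          by_cases hmem : CanElem.anon (CanElem.anon u R' j') R n ∈ (canStage K (i₀+k)).active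
          · rw [if_pos hmem, if_pos (this.mp hmem)]
          · rw [if_neg hmem, if_neg (fun h => hmem (this.mpr h))]
    have hccl : ∀ w, Below w₀ w → w ∈ (canStage K (i₀+k)).active → ∀ C,
        (canStage K (i₀+k)).ccl K.tbox w C
          = (canStage K' k).ccl K'.tbox (relabel w₀ b w) C := by
      intro w hb hwact C
      rw [hT]
      exact iSup_congr fun C₀ => hconc w hb hwact C₀.1
    have hdelta : ∀ w, Below w₀ w → w ∈ (canStage K (i₀+k)).active → ∀ R,
        (canStage K (i₀+k)).delta K.tbox w R
          = (canStage K' k).delta K'.tbox (relabel w₀ b w) R := by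
      intro w hb hwact R
      show (canStage K (i₀+k)).ccl K.tbox w (DLConcept.ex R) - _ = _
      rw [hccl w hb hwact, hconc w hb hwact (DLConcept.ex R)]
      rfl
    constructor
    · intro w hb
      cases hb with
      | base =>
        refine iff_of_true (act_mono (by omega) hact0) ?_
        rw [relabel_self]
        exact ind_act b (k+1)
      | @step u R j hu =>
        rw [relabel_below_child hu]
        have hiff := ih.1 _ (Below.step R j hu)
        rw [relabel_below_child hu] at hiff
        have hiffu := ih.1 u hu
        constructor
        · rintro (h | h)
          · exact Set.mem_union_left _ (hiff.mp h)
          · obtain ⟨u', R', j'', heq, hu'act, hdlt⟩ := h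
            rw [CanElem.anon.injEq] at heq
            obtain ⟨rfl, rfl, rfl⟩ := heq
            refine Set.mem_union_right _ ⟨relabel w₀ b u, R, j, rfl, hiffu.mp hu'act, ?_⟩
            show (j : ℕ∞) < (canStage K' k).delta K'.tbox (relabel w₀ b u) R
            rw [← hdelta u hu hu'act R]
            exact_mod_cast hdlt
        · rintro (h | h)
          · exact Set.mem_union_left _ (hiff.mpr h)
          · obtain ⟨u', R', j'', heq, hu'act, hdlt⟩ := h
            rw [CanElem.anon.injEq] at heq
            obtain ⟨h1, rfl, rfl⟩ := heq
            have hu'act2 : u ∈ (canStage K (i₀+k)).active := hiffu.mpr (h1 ▸ hu'act)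
            refine Set.mem_union_right _ ⟨u, R, j, rfl, hu'act2, ?_⟩
            show (j : ℕ∞) < (canStage K (i₀ + k)).delta K.tbox u R
            rw [hdelta u hu hu'act2 R, h1]
            exact hdlt
    · intro w hb A
      have hiffw := ih.1 w hb
      show (if w ∈ (canStage K (i₀+k)).active
            then (canStage K (i₀+k)).ccl K.tbox w (DLConcept.atomic A) else 0)
          = (if relabel w₀ b w ∈ (canStage K' k).active
            then (canStage K' k).ccl K'.tbox (relabel w₀ b w) (DLConcept.atomic A) else 0)
      by_cases hw : w ∈ (canStage K (i₀+k)).active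
      · rw [if_pos hw, if_pos (hiffw.mp hw), hccl w hb hw]
      · rw [if_neg hw, if_neg (fun h => hw (hiffw.mpr h))]

lemma sim_cI
    (hmin : ∀ i' < i₀, CanElem.anon (.ind c0) R₀ j₀ ∉ (canStage K i').active)
    (hact0 : CanElem.anon (.ind c0) R₀ j₀ ∈ (canStage K i₀).active)
    (hT : K'.tbox = K.tbox)
    (hK'c : ∀ A e, K'.abox.mult (Assertion.conceptA A e) = 0)
    (hbassert : ∀ R, bagSum (fun e : Ind => assertVal K' R b e) = pbit R R₀) :
    ∀ w, Below (CanElem.anon (.ind c0) R₀ j₀) w → ∀ A,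
      (canInterp K).cI A w = (canInterp K').cI A (relabel (CanElem.anon (.ind c0) R₀ j₀) b w) := by
  intro w hb A
  show (⨆ i, (canStage K i).c A w) = ⨆ k, (canStage K' k).c A _
  rw [iSup_shift (fun i => (canStage K i).c A w) (fun i j hij => c_mono_le hij A w) i₀]
  exact iSup_congr fun k => (sim hmin hact0 hT hK'c hbassert k).2 w hb A

lemma sim_actW
    (hmin : ∀ i' < i₀, CanElem.anon (.ind c0) R₀ j₀ ∉ (canStage K i').active)
    (hact0 : CanElem.anon (.ind c0) R₀ j₀ ∈ (canStage K i₀).active)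
    (hT : K'.tbox = K.tbox)
    (hK'c : ∀ A e, K'.abox.mult (Assertion.conceptA A e) = 0)
    (hbassert : ∀ R, bagSum (fun e : Ind => assertVal K' R b e) = pbit R R₀) :
    ∀ w, Below (CanElem.anon (.ind c0) R₀ j₀) w →
      (actW K w ↔ actW K' (relabel (CanElem.anon (.ind c0) R₀ j₀) b w)) := by
  intro w hb
  constructor
  · rintro ⟨i, hi⟩
    exact ⟨i, ((sim hmin hact0 hT hK'c hbassert i).1 w hb).mp (act_mono (by omega) hi)⟩
  · rintro ⟨k, hk⟩
    exact ⟨i₀ + k, ((sim hmin hact0 hT hK'c hbassert k).1 w hb).mpr hk⟩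

end Stmt11Sim

section Stmt11Query

open CanElem

lemma list_prod_ne_zero {l : List QAtom} {g : QAtom → ℕ∞}
    (h : (l.map g).prod ≠ 0) : ∀ x ∈ l, g x ≠ 0 := by
  intro x hx hgx
  apply h
  apply List.prod_eq_zero
  rw [← hgx]
  exact List.mem_map_of_mem (f := g) hx

lemma one_le_list_prod {l : List ℕ∞} (h : ∀ x ∈ l, 1 ≤ x) : 1 ≤ l.prod := by
  induction l with
  | nil => simp
  | cons a t ih =>
    rw [List.prod_cons]
    calc (1 : ℕ∞) = 1 * 1 := (one_mul 1).symm
      _ ≤ a * t.prod := mul_le_mul' (h a (by simp)) (ih fun x hx => h x (by simp [hx]))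

lemma mem_foldr_append {α β : Type*} (g : α → List β) (l : List α) (x : β) :
    x ∈ l.foldr (fun a acc => g a ++ acc) [] ↔ ∃ a ∈ l, x ∈ g a := by
  induction l with
  | nil => simp
  | cons a t ih => simp [ih]

lemma mem_termsOfList {l : List QAtom} {t : Term} :
    t ∈ termsOfList l ↔ ∃ atm ∈ l, t ∈ QAtom.terms atm := mem_foldr_append _ l t

lemma mem_subVars {q : CQ} {z' : Finset Var} {v : Var} :
    v ∈ subVars q z' ↔ ∃ atm ∈ q.subAtoms z', v ∈ QAtom.vars atm := mem_foldr_append _ _ v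

lemma mem_inds {q : CQ} {d : Ind} :
    d ∈ q.inds ↔ ∃ t ∈ termsOfList q.atoms, d ∈ Term.indsOf t := mem_foldr_append _ _ d

lemma foldr_max_le {l : List ℕ} {d : ℕ} (h : d ∈ l) : d ≤ l.foldr max 0 := by
  induction l with
  | nil => exact absurd h (by simp)
  | cons a t ih =>
    rcases List.mem_cons.mp h with rfl | h'
    · exact le_max_left _ _
    · exact le_trans (ih h') (le_max_right _ _)

lemma le_maxInd {q : CQ} {d : Ind} (h : d ∈ q.inds) : d ≤ q.maxInd := foldr_max_le h

lemma var_mem_vars_iff {v : Var} {atm : QAtom} :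
    v ∈ QAtom.vars atm ↔ Term.var v ∈ QAtom.terms atm := by
  cases atm with
  | conceptAt A t =>
    cases t <;> simp [QAtom.vars, QAtom.terms, Term.varsOf, eq_comm]
  | roleAt P t₁ t₂ =>
    cases t₁ <;> cases t₂ <;>
      simp [QAtom.vars, QAtom.terms, Term.varsOf, eq_comm]
  | eqAt z t =>
    cases t <;> simp [QAtom.vars, QAtom.terms, Term.varsOf, eq_comm]

lemma occ_of_eqRel {q : CQ} {s t : Term} (h : q.eqRel s t) :
    s = t ∨ ((∀ v, s = Term.var v → ∃ atm ∈ q.atoms, v ∈ QAtom.vars atm)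
      ∧ (∀ v, t = Term.var v → ∃ atm ∈ q.atoms, v ∈ QAtom.vars atm)) := by
  induction h with
  | rel s t hst =>
    obtain ⟨z, t', hmem, rfl, rfl⟩ := hst
    right
    constructor
    · rintro v hv
      rw [Term.var.injEq] at hv
      exact ⟨_, hmem, by simp [QAtom.vars, hv]⟩
    · rintro v rfl
      exact ⟨_, hmem, by simp [QAtom.vars, Term.varsOf]⟩
  | refl => left; rfl
  | symm s t _ ih =>
    rcases ih with h | h
    · left; exact h.symm
    · right; exact ⟨h.2, h.1⟩
  | trans s t u _ _ ih1 ih2 =>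
    rcases ih1 with h1 | h1
    · rw [h1]; exact ih2
    · rcases ih2 with h2 | h2
      · rw [← h2]; right; exact h1
      · right; exact ⟨h1.1, h2.2⟩

lemma occ_of_var {q : CQ} (hsafe : q.Safe) {v : Var} (hv : v ∈ q.vars) :
    ∃ atm ∈ q.atoms, v ∈ QAtom.vars atm := by
  obtain ⟨t, atm, hmem, hneq, htm, hrel⟩ := hsafe v hv
  rcases occ_of_eqRel hrel with h | h
  · exact ⟨atm, hmem, var_mem_vars_iff.mpr (h ▸ htm)⟩
  · exact h.1 v rfl

lemma isAnon_iff {x : CanElem} : x.isAnon ↔ ∃ u R j, x = CanElem.anon u R j := by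
  cases x <;> simp [CanElem.isAnon]

lemma termVal_var (I : BagInterp) (f : Var → I.Δ) (v : Var) :
    termVal I f (Term.var v) = f v := rfl

lemma termVal_ind (I : BagInterp) (f : Var → I.Δ) (d : Ind) :
    termVal I f (Term.ind d) = I.indMap d := rfl

lemma canInterp_indMap (K : Ontology) (d : Ind) : (canInterp K).indMap d = CanElem.ind d := rfl

lemma termVal_var_can (K : Ontology) (f : Var → CanElem) (v : Var) :
    termVal (canInterp K) f (Term.var v) = f v := rfl

lemma termVal_ind_can (K : Ontology) (f : Var → CanElem) (d : Ind) :
    termVal (canInterp K) f (Term.ind d) = (canInterp K).indMap d := rfl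

lemma below_parent_pin {c0 : Ind} {R₀ : Role} {j₀ : ℕ} {x : CanElem}
    (hb : Below (CanElem.anon (.ind c0) R₀ j₀) x) {d : Ind} {R : Role} {j : ℕ}
    (hx : x = CanElem.anon (.ind d) R j) :
    d = c0 ∧ R = R₀ ∧ j = j₀ ∧ x = CanElem.anon (.ind c0) R₀ j₀ := by
  cases hb with
  | base =>
    rw [CanElem.anon.injEq] at hx
    obtain ⟨h1, h2, h3⟩ := hx
    rw [CanElem.ind.injEq] at h1
    exact ⟨h1.symm, h2.symm, h3.symm, rfl⟩
  | @step u R' j' hu =>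
    rw [CanElem.anon.injEq] at hx
    obtain ⟨u', R'', j'', he⟩ := below_anon hu
    rw [hx.1] at he
    exact absurd he (by simp)

lemma relabel_below_image {c0 b : Ind} {R₀ : Role} {j₀ : ℕ} {x : CanElem}
    (hb : Below (CanElem.anon (.ind c0) R₀ j₀) x) :
    relabel (CanElem.anon (.ind c0) R₀ j₀) b x = CanElem.ind b ∨
      ∃ u R j, relabel (CanElem.anon (.ind c0) R₀ j₀) b x = CanElem.anon u R j := by
  cases hb with
  | base => exact Or.inl (relabel_self _ _)
  | @step u R' j' hu => exact Or.inr ⟨_, _, _, relabel_below_child hu R' j'⟩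

end Stmt11Query

/-- Let `q(x) = ∃y. φ(x,y)` be a rooted CQ, `K` a
DL-Lite_core^bag ontology with TBox `T`, and `z ⊆ y`.  If `z` is not realisable
by `T` (w.r.t. a choice `alpha` of the atoms `α_{z'}`), then `[q,z]^{C(K)}` is
the empty bag. -/
theorem statement_11 (K : Ontology) (hcore : TBox.IsCore K.tbox)
    (q : CQ) (hwf : q.WellFormed) (hr : q.Rooted)
    (z : Finset Var) (hz : z ⊆ q.existVars.toFinset)
    (alpha : Finset Var → QAtom)
    (halpha : ∀ z' : Finset Var, q.MAConnected z z' → z'.Nonempty →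
      IsAlphaFor q z z' (alpha z'))
    (hreal : ¬ RealisableZ K.tbox q z alpha)
    (a : List Ind) :
    q.restrictedAnswer K z a = 0 := by
  classical
  by_contra hne
  have hex : ∃ x : {f : Var → CanElem //
      (∀ v, v ∉ q.vars → f v = CanElem.ind 0) ∧
      q.answerVars.map f = a.map CanElem.ind ∧
      ∀ v ∈ q.existVars, (v ∈ z → CanElem.isAnon (f v)) ∧
        (v ∉ z → ∃ b : Ind, f v = CanElem.ind b)},
      (q.atoms.map (QAtom.mult (canInterp K) x.1)).prod ≠ 0 := by
    by_contra h
    push_neg at h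
    exact hne (bagSum_eq_zero.mpr h)
  obtain ⟨⟨f, hjunk, hans, hexist⟩, hprodne⟩ := hex
  have hmult : ∀ atm ∈ q.atoms, QAtom.mult (canInterp K) f atm ≠ 0 :=
    list_prod_ne_zero hprodne
  have hq4 := hwf.2.2.2.1
  have hanon : ∀ v ∈ z, CanElem.isAnon (f v) :=
    fun v hv => (hexist v (List.mem_toFinset.mp (hz hv))).1 hv
  have hindim : ∀ v ∈ q.vars, v ∉ z → ∃ d, f v = CanElem.ind d := by
    intro v hv hvz
    rcases List.mem_append.mp hv with h | h
    · have hmem : f v ∈ q.answerVars.map f := List.mem_map_of_mem (f := f) h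
      rw [hans] at hmem
      obtain ⟨d, _, hfd⟩ := List.mem_map.mp hmem
      exact ⟨d, hfd.symm⟩
    · exact (hexist v h).2 hvz
  have htermind : ∀ atm ∈ q.atoms, ∀ t ∈ QAtom.terms atm, ¬ Term.IsZVar t z →
      ∃ d, termVal (canInterp K) f t = CanElem.ind d := by
    intro atm hatm t ht hnz
    cases t with
    | ind d => exact ⟨d, rfl⟩
    | var v =>
      have hvz : v ∉ z := fun hvz => hnz ⟨v, hvz, rfl⟩
      exact hindim v (hq4 atm hatm v (var_mem_vars_iff.mpr ht)) hvz
  have hnoanonind : ∀ (x : CanElem) (d : Ind), CanElem.isAnon x → x = CanElem.ind d → False := by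
    intro x d hx hxd
    rw [hxd] at hx
    exact hx
  refine hreal ⟨?_, ?_⟩
  · -- equality consistency
    intro v t hmem hvz
    by_contra hniz
    obtain ⟨d, hd⟩ := htermind _ hmem t (by simp [QAtom.terms]) hniz
    have hm := hmult _ hmem
    simp only [QAtom.mult] at hm
    have hcond : f v = termVal (canInterp K) f t := by
      by_contra hc
      exact hm (if_neg hc)
    exact hnoanonind (f v) d (hanon v hvz) (hcond.trans hd)
  · -- realisability of every nonempty ma-connected z'
    intro z' hma hnemp
    obtain ⟨hαsub, hαcase⟩ := halpha z' hma hnemp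
    have hsubatoms : ∀ atm ∈ q.subAtoms z', atm ∈ q.atoms ∧ ∃ v ∈ z', v ∈ QAtom.vars atm := by
      intro atm hatm
      have h := List.mem_filter.mp hatm
      refine ⟨h.1, by simpa using h.2⟩
    have hz'z : z' ⊆ z := hma.1
    have hclose : ∀ v ∈ z', ∀ atm ∈ q.atoms, v ∈ QAtom.vars atm →
        ∀ u ∈ z, u ∈ QAtom.vars atm → u ∈ z' := by
      intro v hv atm hatm hvin u hu huin
      apply hma.2.1 v hv u hu
      exact Relation.ReflTransGen.single
        ⟨⟨atm, hatm, var_mem_vars_iff.mp hvin, var_mem_vars_iff.mp huin⟩,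
          ⟨v, hz'z hv, rfl⟩, ⟨u, hu, rfl⟩⟩
    have htopstep : ∀ t s : Term, q.zAdj z t s → ∀ v u : Var, t = Term.var v →
        s = Term.var u → top1 (f v) = top1 (f u) := by
      rintro t s ⟨⟨atm, hatm, htm, hsm⟩, htz, hsz⟩ v u rfl rfl
      have hvz : v ∈ z := by
        obtain ⟨v', hv', he⟩ := htz
        rw [Term.var.injEq] at he
        exact he ▸ hv'
      have huz : u ∈ z := by
        obtain ⟨u', hu', he⟩ := hsz
        rw [Term.var.injEq] at he
        exact he ▸ hu'
      cases atm with
      | conceptAt A t0 =>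
        simp only [QAtom.terms, List.mem_singleton] at htm hsm
        rw [← hsm, Term.var.injEq] at htm
        rw [htm]
      | roleAt P t1 t2 =>
        have hm := hmult _ hatm
        simp only [QAtom.mult] at hm
        have hedge : ∀ v1 v2 : Var, t1 = Term.var v1 → t2 = Term.var v2 → v1 ∈ z → v2 ∈ z →
            top1 (f v1) = top1 (f v2) := by
          intro v1 v2 h1 h2 hv1 hv2
          rw [h1, h2, termVal_var_can, termVal_var_can] at hm
          rcases can_edge_cases hm with ⟨a1, b1, ha1, _⟩ | ⟨j, hj, _⟩ | ⟨j, hj, _⟩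
          · exact absurd ha1 (fun hh => hnoanonind _ _ (hanon v1 hv1) hh)
          · rw [hj]
            exact (top1_anon_of_anon (isAnon_iff.mp (hanon v1 hv1))).symm
          · rw [hj]
            exact top1_anon_of_anon (isAnon_iff.mp (hanon v2 hv2))
        simp only [QAtom.terms, List.mem_cons, List.mem_singleton, List.not_mem_nil,
          or_false] at htm hsm
        rcases htm with h1 | h1 <;> rcases hsm with h2 | h2
        · rw [← h2, Term.var.injEq] at h1; rw [h1]
        · exact hedge v u h1.symm h2.symm hvz huz
        · exact (hedge u v h2.symm h1.symm huz hvz).symm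
        · rw [← h2, Term.var.injEq] at h1; rw [h1]
      | eqAt z0 t0 =>
        have hm := hmult _ hatm
        simp only [QAtom.mult] at hm
        have heq0 : f z0 = termVal (canInterp K) f t0 := by
          by_contra hc
          exact hm (if_neg hc)
        have himg : ∀ w : Var, Term.var w ∈ QAtom.terms (QAtom.eqAt z0 t0) → f w = f z0 := by
          intro w hw
          simp only [QAtom.terms, List.mem_cons, List.mem_singleton, List.not_mem_nil,
            or_false] at hw
          rcases hw with hw | hw
          · rw [Term.var.injEq] at hw
            rw [hw]
          · rw [← hw, termVal_var_can] at heq0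
            exact heq0.symm
        rw [himg v htm, himg u hsm]
    have htop : ∀ v u : Var, Relation.ReflTransGen (q.zAdj z) (Term.var v) (Term.var u) →
        top1 (f v) = top1 (f u) := by
      intro v u h
      have H : ∀ s, Relation.ReflTransGen (q.zAdj z) (Term.var v) s →
          ∀ u', s = Term.var u' → top1 (f v) = top1 (f u') := by
        intro s hs
        induction hs with
        | refl =>
          rintro u' hu'
          rw [Term.var.injEq] at hu'
          rw [hu']
        | tail hab hbc ih =>
          rintro u' rfl
          obtain ⟨v', hv'z, hbv'⟩ := hbc.2.1
          exact (ih v' hbv').trans (htopstep _ _ hbc v' u' hbv' rfl)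
      exact H _ h u rfl
    -- analysis of the alpha atom
    have hcont : ∀ (Pα : AtomicRole) (tα : Term) (vα : Var), vα ∈ z' →
        ¬ Term.IsZVar tα z →
        (alpha z' = QAtom.roleAt Pα tα (Term.var vα) ∨
          alpha z' = QAtom.roleAt Pα (Term.var vα) tα) →
        RealisableMA K.tbox q z z' (alpha z') := by
      intro Pα tα vα hvα htnz hform
      have hαatoms : alpha z' ∈ q.atoms := (hsubatoms _ hαsub).1
      have htαterm : tα ∈ QAtom.terms (alpha z') := by
        rcases hform with h | h <;> rw [h] <;> simp [QAtom.terms]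
      obtain ⟨c0, hc0⟩ := htermind _ hαatoms tα htαterm htnz
      have hfvanon := hanon vα (hz'z hvα)
      obtain ⟨R₀, j₀, hfvα, hactw, horA⟩ :
          ∃ R₀ j₀, f vα = CanElem.anon (CanElem.ind c0) R₀ j₀ ∧ actW K (f vα) ∧
            ((alpha z' = QAtom.roleAt Pα tα (Term.var vα) ∧ R₀ = Role.atomic Pα) ∨
             (alpha z' = QAtom.roleAt Pα (Term.var vα) tα ∧ R₀ = Role.inv Pα)) := by
        rcases hform with h | h
        · have hm := hmult _ hαatoms
          rw [h] at hm
          simp only [QAtom.mult, termVal_var_can] at hm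
          rw [hc0] at hm
          rcases can_edge_cases hm with ⟨a1, b1, _, hb1⟩ | ⟨j, hj, hw⟩ | ⟨j, hj, _⟩
          · exact absurd hb1 (fun hh => hnoanonind _ _ hfvanon hh)
          · exact ⟨Role.atomic Pα, j, hj, hj ▸ hw, Or.inl ⟨h, rfl⟩⟩
          · exact absurd hj (by simp)
        · have hm := hmult _ hαatoms
          rw [h] at hm
          simp only [QAtom.mult, termVal_var_can] at hm
          rw [hc0] at hm
          rcases can_edge_cases hm with ⟨a1, b1, ha1, _⟩ | ⟨j, hj, _⟩ | ⟨j, hj, hw⟩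
          · exact absurd ha1 (fun hh => hnoanonind _ _ hfvanon hh)
          · exact absurd hj (by simp)
          · exact ⟨Role.inv Pα, j, hj, hj ▸ hw, Or.inr ⟨h, rfl⟩⟩
      have hbelow : ∀ v ∈ z', Below (CanElem.anon (CanElem.ind c0) R₀ j₀) (f v) := by
        intro v hv
        apply below_of_top1 (f v) (hanon v (hz'z hv))
        have h1 := htop v vα (hma.2.2 v hv vα hvα)
        rw [h1, hfvα]
        rfl
      -- parent-pin facts for role atoms with exactly one z'-variable
      have hpin1 : ∀ (P' : AtomicRole) (s1 s2 : Term), QAtom.roleAt P' s1 s2 ∈ q.atoms →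
          ∀ v2 ∈ z', s2 = Term.var v2 → ¬ Term.IsZVar s1 z →
            termVal (canInterp K) f s1 = CanElem.ind c0 ∧
              f v2 = CanElem.anon (CanElem.ind c0) R₀ j₀ ∧ R₀ = Role.atomic P' := by
        intro P' s1 s2 hatm v2 hv2 hs2 h1nz
        have hm := hmult _ hatm
        simp only [QAtom.mult] at hm
        obtain ⟨d, hd⟩ := htermind _ hatm s1 (by simp [QAtom.terms]) h1nz
        rw [hd, hs2, termVal_var_can] at hm
        rcases can_edge_cases hm with ⟨a1, b1, _, hb1⟩ | ⟨j, hj, _⟩ | ⟨j, hj, _⟩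
        · exact absurd hb1 (fun hh => hnoanonind _ _ (hanon v2 (hz'z hv2)) hh)
        · obtain ⟨hdc, hRe, hje, hfe⟩ := below_parent_pin (hbelow v2 hv2) hj
          exact ⟨hd.trans (by rw [hdc]), hfe, hRe.symm⟩
        · exact absurd hj (by simp)
      have hpin2 : ∀ (P' : AtomicRole) (s1 s2 : Term), QAtom.roleAt P' s1 s2 ∈ q.atoms →
          ∀ v1 ∈ z', s1 = Term.var v1 → ¬ Term.IsZVar s2 z →
            termVal (canInterp K) f s2 = CanElem.ind c0 ∧
              f v1 = CanElem.anon (CanElem.ind c0) R₀ j₀ ∧ R₀ = Role.inv P' := by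
        intro P' s1 s2 hatm v1 hv1 hs1 h2nz
        have hm := hmult _ hatm
        simp only [QAtom.mult] at hm
        obtain ⟨d, hd⟩ := htermind _ hatm s2 (by simp [QAtom.terms]) h2nz
        rw [hd, hs1, termVal_var_can] at hm
        rcases can_edge_cases hm with ⟨a1, b1, ha1, _⟩ | ⟨j, hj, _⟩ | ⟨j, hj, _⟩
        · exact absurd ha1 (fun hh => hnoanonind _ _ (hanon v1 (hz'z hv1)) hh)
        · exact absurd hj (by simp)
        · obtain ⟨hdc, hRe, hje, hfe⟩ := below_parent_pin (hbelow v1 hv1) hj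
          exact ⟨hd.trans (by rw [hdc]), hfe, hRe.symm⟩
      have httermmem : ∀ t' ∈ q.tTerms z z', (¬ Term.IsZVar t' z) ∧
          ∃ atm ∈ q.subAtoms z', t' ∈ QAtom.terms atm := by
        intro t' ht'
        have h := List.mem_filter.mp ht'
        exact ⟨by simpa using h.2, mem_termsOfList.mp h.1⟩
      have htterm : ∀ t' ∈ q.tTerms z z', termVal (canInterp K) f t' = CanElem.ind c0 := by
        intro t' ht'
        obtain ⟨hn, atm, hatm, htmem⟩ := httermmem t' ht'
        obtain ⟨hatoms, v1, hv1, hv1in⟩ := hsubatoms atm hatm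
        cases atm with
        | conceptAt A s =>
          have hv1t : Term.var v1 ∈ QAtom.terms (QAtom.conceptAt A s) := var_mem_vars_iff.mp hv1in
          simp only [QAtom.terms, List.mem_singleton] at hv1t htmem
          rw [htmem, ← hv1t] at hn
          exact absurd ⟨v1, hz'z hv1, rfl⟩ hn
        | eqAt v0 s =>
          exfalso
          have hm := hmult _ hatoms
          simp only [QAtom.mult] at hm
          have heq0 : f v0 = termVal (canInterp K) f s := by
            by_contra hc
            exact hm (if_neg hc)
          by_cases hv0z : v0 ∈ z
          · simp only [QAtom.terms, List.mem_cons, List.mem_singleton, List.not_mem_nil,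
              or_false] at htmem
            rcases htmem with rfl | rfl
            · exact hn ⟨v0, hv0z, rfl⟩
            · obtain ⟨d, hd⟩ := htermind _ hatoms t' (by simp [QAtom.terms]) hn
              exact hnoanonind _ _ (hanon v0 hv0z) (heq0.trans hd)
          · have hv1z := hz'z hv1
            simp only [QAtom.vars, List.mem_cons] at hv1in
            rcases hv1in with rfl | hsv
            · exact hv0z hv1z
            · have hs : s = Term.var v1 := by
                cases s with
                | var w =>
                  simp only [Term.varsOf, List.mem_singleton] at hsv
                  rw [hsv]
                | ind d => exact absurd hsv (by simp [Term.varsOf])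
              rw [hs, termVal_var_can] at heq0
              obtain ⟨d, hd⟩ := hindim v0 (hq4 _ hatoms v0 (by simp [QAtom.vars])) hv0z
              exact hnoanonind _ _ (hanon v1 hv1z) (heq0.symm.trans hd)
        | roleAt P' s1 s2 =>
          have hv1t : Term.var v1 ∈ QAtom.terms (QAtom.roleAt P' s1 s2) :=
            var_mem_vars_iff.mp hv1in
          simp only [QAtom.terms, List.mem_cons, List.mem_singleton, List.not_mem_nil,
            or_false] at hv1t htmem
          rcases htmem with rfl | rfl
          · rcases hv1t with h | h
            · exact absurd ⟨v1, hz'z hv1, h.symm⟩ hn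
            · exact (hpin1 P' t' s2 hatoms v1 hv1 h.symm hn).1
          · rcases hv1t with h | h
            · exact (hpin2 P' s1 t' hatoms v1 hv1 h.symm hn).1
            · exact absurd ⟨v1, hz'z hv1, h.symm⟩ hn
      have hconsts : ∀ d : Ind, Term.ind d ∈ q.tTerms z z' → d = c0 := by
        intro d hd
        have h := htterm _ hd
        rw [termVal_ind_can, canInterp_indMap] at h
        exact CanElem.ind.inj h
      have hac : (∃ d, Term.ind d ∈ q.tTerms z z') → freshA q z z' = c0 := by
        intro hexd
        rw [freshA, dif_pos hexd]
        exact hconsts _ hexd.choose_spec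
      have hale : freshA q z z' ≤ q.maxInd + 1 := by
        rw [freshA]
        split
        · rename_i hexd
          have hmem := hexd.choose_spec
          have h1 := (List.mem_filter.mp hmem).1
          obtain ⟨atm, hatm, htm⟩ := mem_termsOfList.mp h1
          have h2 : hexd.choose ∈ q.inds := mem_inds.mpr
            ⟨Term.ind hexd.choose,
              mem_termsOfList.mpr ⟨atm, (hsubatoms atm hatm).1, htm⟩, by simp [Term.indsOf]⟩
          exact le_trans (le_maxInd h2) (Nat.le_succ _)
        · exact le_refl _
      have hab : freshA q z z' ≠ freshB q := by
        intro h
        have hbv : freshB q = q.maxInd + 2 := rfl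
        rw [h, hbv] at hale
        exact absurd hale (by exact Nat.not_succ_le_self _)
      have hA'eq : (R₀ = Role.atomic Pα ∧ alphaABox z' (alpha z') (freshA q z z') (freshB q)
            = {Assertion.roleA Pα (freshA q z z') (freshB q)}) ∨
          (R₀ = Role.inv Pα ∧ alphaABox z' (alpha z') (freshA q z z') (freshB q)
            = {Assertion.roleA Pα (freshB q) (freshA q z z')}) := by
        rcases horA with ⟨hα, hR⟩ | ⟨hα, hR⟩
        · left
          refine ⟨hR, ?_⟩
          rw [hα]
          show (if Term.IsZVar (Term.var vα) z' then _ else _) = _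
          rw [if_pos ⟨vα, hvα, rfl⟩]
        · right
          refine ⟨hR, ?_⟩
          rw [hα]
          show (if Term.IsZVar tα z' then _ else _) = _
          rw [if_neg ?_]
          rintro ⟨v, hv, he⟩
          exact htnz ⟨v, hz'z hv, he⟩
      have hK'c : ∀ A e, (⟨K.tbox, alphaABox z' (alpha z') (freshA q z z') (freshB q)⟩ :
          Ontology).abox.mult (Assertion.conceptA A e) = 0 := by
        intro A e
        rcases hA'eq with ⟨_, hAe⟩ | ⟨_, hAe⟩ <;>
          (show (((alphaABox z' (alpha z') (freshA q z z') (freshB q)).count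
              (Assertion.conceptA A e) : ℕ) : ℕ∞) = 0
           rw [hAe, Multiset.count_singleton, if_neg (by simp)]
           rfl)
      have hbassert : ∀ R, bagSum (fun e : Ind =>
          assertVal (⟨K.tbox, alphaABox z' (alpha z') (freshA q z z') (freshB q)⟩ : Ontology)
            R (freshB q) e) = pbit R R₀ := by
        have hzero : bagSum (fun _ : Ind => (0 : ℕ∞)) = 0 :=
          bagSum_eq_zero.mpr (fun _ => rfl)
        intro R
        rcases hA'eq with ⟨hRa, hAe⟩ | ⟨hRa, hAe⟩
        · cases R with
          | atomic Q =>
            have hz0 : ∀ e : Ind, assertVal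
                (⟨K.tbox, alphaABox z' (alpha z') (freshA q z z') (freshB q)⟩ : Ontology)
                (Role.atomic Q) (freshB q) e = 0 := by
              intro e
              show (((alphaABox z' (alpha z') (freshA q z z') (freshB q)).count
                  (Assertion.roleA Q (freshB q) e) : ℕ) : ℕ∞) = 0
              rw [hAe, Multiset.count_singleton, if_neg]
              · rfl
              · intro h
                injection h with h1 h2 h3
                exact hab h2.symm
            rw [bagSum_congr hz0, hzero, hRa]
            simp [pbit, invRole]
          | inv Q =>
            by_cases hQ : Q = Pα
            · subst hQ
              have hfe : ∀ e : Ind, assertVal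
                  (⟨K.tbox, alphaABox z' (alpha z') (freshA q z z') (freshB q)⟩ : Ontology)
                  (Role.inv Q) (freshB q) e
                  = (if e = freshA q z z' then (1 : ℕ∞) else 0) := by
                intro e
                show (((alphaABox z' (alpha z') (freshA q z z') (freshB q)).count
                    (Assertion.roleA Q e (freshB q)) : ℕ) : ℕ∞) = _
                rw [hAe, Multiset.count_singleton]
                by_cases he : e = freshA q z z'
                · rw [if_pos (by rw [he]), if_pos he]
                  simp
                · rw [if_neg (by intro h; injection h with h1 h2 h3; exact he h2), if_neg he]
                  simp
              rw [bagSum_congr hfe, bagSum_point, hRa]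
              simp [pbit, invRole]
            · have hz0 : ∀ e : Ind, assertVal
                  (⟨K.tbox, alphaABox z' (alpha z') (freshA q z z') (freshB q)⟩ : Ontology)
                  (Role.inv Q) (freshB q) e = 0 := by
                intro e
                show (((alphaABox z' (alpha z') (freshA q z z') (freshB q)).count
                    (Assertion.roleA Q e (freshB q)) : ℕ) : ℕ∞) = 0
                rw [hAe, Multiset.count_singleton,
                  if_neg (by intro h; injection h with h1 h2 h3; exact hQ h1)]
                rfl
              rw [bagSum_congr hz0, hzero, hRa]
              simp [pbit, invRole, hQ]
        · cases R with
          | atomic Q =>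
            by_cases hQ : Q = Pα
            · subst hQ
              have hfe : ∀ e : Ind, assertVal
                  (⟨K.tbox, alphaABox z' (alpha z') (freshA q z z') (freshB q)⟩ : Ontology)
                  (Role.atomic Q) (freshB q) e
                  = (if e = freshA q z z' then (1 : ℕ∞) else 0) := by
                intro e
                show (((alphaABox z' (alpha z') (freshA q z z') (freshB q)).count
                    (Assertion.roleA Q (freshB q) e) : ℕ) : ℕ∞) = _
                rw [hAe, Multiset.count_singleton]
                by_cases he : e = freshA q z z'
                · rw [if_pos (by rw [he]), if_pos he]
                  simp
                · rw [if_neg (by intro h; injection h with h1 h2 h3; exact he h3), if_neg he]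
                  simp
              rw [bagSum_congr hfe, bagSum_point, hRa]
              simp [pbit, invRole]
            · have hz0 : ∀ e : Ind, assertVal
                  (⟨K.tbox, alphaABox z' (alpha z') (freshA q z z') (freshB q)⟩ : Ontology)
                  (Role.atomic Q) (freshB q) e = 0 := by
                intro e
                show (((alphaABox z' (alpha z') (freshA q z z') (freshB q)).count
                    (Assertion.roleA Q (freshB q) e) : ℕ) : ℕ∞) = 0
                rw [hAe, Multiset.count_singleton,
                  if_neg (by intro h; injection h with h1 h2 h3; exact hQ h1)]
                rfl
              rw [bagSum_congr hz0, hzero, hRa]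
              simp [pbit, invRole, hQ]
          | inv Q =>
            have hz0 : ∀ e : Ind, assertVal
                (⟨K.tbox, alphaABox z' (alpha z') (freshA q z z') (freshB q)⟩ : Ontology)
                (Role.inv Q) (freshB q) e = 0 := by
              intro e
              show (((alphaABox z' (alpha z') (freshA q z z') (freshB q)).count
                  (Assertion.roleA Q e (freshB q)) : ℕ) : ℕ∞) = 0
              rw [hAe, Multiset.count_singleton, if_neg]
              · rfl
              · intro h
                injection h with h1 h2 h3
                exact hab h3.symm
            rw [bagSum_congr hz0, hzero, hRa]
            simp [pbit, invRole]
      -- simulation setup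
      have hactw₀ : actW K (CanElem.anon (CanElem.ind c0) R₀ j₀) := hfvα ▸ hactw
      have hact0 : CanElem.anon (CanElem.ind c0) R₀ j₀
          ∈ (canStage K (Nat.find hactw₀)).active := Nat.find_spec hactw₀
      have hmin : ∀ i' < Nat.find hactw₀,
          CanElem.anon (CanElem.ind c0) R₀ j₀ ∉ (canStage K i').active :=
        fun i' hi' => Nat.find_min hactw₀ hi'
      have hsimC := sim_cI (K := K)
        (K' := ⟨K.tbox, alphaABox z' (alpha z') (freshA q z z') (freshB q)⟩)
        (b := freshB q) hmin hact0 rfl hK'c hbassert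
      have hsimA := sim_actW (K := K)
        (K' := ⟨K.tbox, alphaABox z' (alpha z') (freshA q z z') (freshB q)⟩)
        (b := freshB q) hmin hact0 rfl hK'c hbassert
      -- the witnessing valuation
      set g : Var → CanElem := fun v =>
        if v ∈ z' then relabel (CanElem.anon (CanElem.ind c0) R₀ j₀) (freshB q) (f v)
        else if v ∈ subVars q z' then CanElem.ind (freshA q z z') else CanElem.ind 0
        with hgdef
      have hgz'v : ∀ v ∈ z', g v
          = relabel (CanElem.anon (CanElem.ind c0) R₀ j₀) (freshB q) (f v) := by
        intro v hv
        simp only [hgdef]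
        rw [if_pos hv]
      have hgsv : ∀ v, v ∉ z' → v ∈ subVars q z' → g v = CanElem.ind (freshA q z z') := by
        intro v hv hsv
        simp only [hgdef]
        rw [if_neg hv, if_pos hsv]
      have hgo : ∀ v, v ∉ z' → v ∉ subVars q z' → g v = CanElem.ind 0 := by
        intro v hv hsv
        simp only [hgdef]
        rw [if_neg hv, if_neg hsv]
      have hoccz' : ∀ v ∈ z', v ∈ subVars q z' := by
        intro v hv
        have hvars : v ∈ q.vars :=
          List.mem_append.mpr (Or.inr (List.mem_toFinset.mp (hz (hz'z hv))))
        obtain ⟨atm, hatm, hvin⟩ := occ_of_var hwf.2.2.2.2 hvars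
        refine mem_subVars.mpr ⟨atm, List.mem_filter.mpr ⟨hatm, ?_⟩, hvin⟩
        simpa using ⟨v, hv, hvin⟩
      have hg1 : ∀ v, v ∉ subVars q z' → g v = CanElem.ind 0 := by
        intro v hv
        exact hgo v (fun h => hv (hoccz' v h)) hv
      have hg2 : ∀ t' ∈ q.tTerms z z',
          termVal (canInterp ⟨K.tbox, alphaABox z' (alpha z') (freshA q z z') (freshB q)⟩) g t'
            = CanElem.ind (freshA q z z') := by
        intro t' ht'
        obtain ⟨hn, atm, hatm, htmem⟩ := httermmem t' ht'
        cases t' with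
        | ind d =>
          have hd : d = c0 := hconsts d ht'
          rw [termVal_ind_can, canInterp_indMap, hac ⟨d, ht'⟩, hd]
        | var u =>
          have hunz : u ∉ z := fun hh => hn ⟨u, hh, rfl⟩
          have hunz' : u ∉ z' := fun hh => hunz (hz'z hh)
          have husv : u ∈ subVars q z' :=
            mem_subVars.mpr ⟨atm, hatm, var_mem_vars_iff.mpr htmem⟩
          rw [termVal_var_can]
          exact hgsv u hunz' husv
      have hg3 : ∀ v ∈ z', g v ≠ CanElem.ind (freshA q z z') := by
        intro v hv
        rw [hgz'v v hv]
        rcases relabel_below_image (hbelow v hv) with h | ⟨u, R, j, h⟩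
        · rw [h]
          intro hh
          rw [CanElem.ind.injEq] at hh
          exact hab hh.symm
        · rw [h]
          simp
      -- all subquery atoms have positive multiplicity under g
      have hgatoms : ∀ atm ∈ q.subAtoms z', 1 ≤ QAtom.mult
          (canInterp ⟨K.tbox, alphaABox z' (alpha z') (freshA q z z') (freshB q)⟩) g atm := by
        intro atm hatm
        obtain ⟨hatoms, v1, hv1, hv1in⟩ := hsubatoms atm hatm
        rw [ENat.one_le_iff_ne_zero]
        cases atm with
        | conceptAt A s =>
          have hv1t := var_mem_vars_iff.mp hv1in
          simp only [QAtom.terms, List.mem_singleton] at hv1t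
          rw [← hv1t]
          simp only [QAtom.mult, termVal_var_can]
          rw [hgz'v v1 hv1, ← hsimC (f v1) (hbelow v1 hv1) A]
          have hm := hmult _ hatoms
          rw [← hv1t] at hm
          simp only [QAtom.mult, termVal_var_can] at hm
          exact hm
        | eqAt v0 s =>
          have hm := hmult _ hatoms
          simp only [QAtom.mult] at hm
          have heq0 : f v0 = termVal (canInterp K) f s := by
            by_contra hc
            exact hm (if_neg hc)
          have hv0z' : v0 ∈ z' := by
            by_cases hv0z : v0 ∈ z
            · exact hclose v1 hv1 _ hatoms hv1in v0 hv0z (by simp [QAtom.vars])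
            · exfalso
              simp only [QAtom.vars, List.mem_cons] at hv1in
              rcases hv1in with rfl | hsv
              · exact hv0z (hz'z hv1)
              · have hs : s = Term.var v1 := by
                  cases s with
                  | var w =>
                    simp only [Term.varsOf, List.mem_singleton] at hsv
                    rw [hsv]
                  | ind d => exact absurd hsv (by simp [Term.varsOf])
                rw [hs, termVal_var_can] at heq0
                obtain ⟨d, hd⟩ := hindim v0 (hq4 _ hatoms v0 (by simp [QAtom.vars])) hv0z
                exact hnoanonind _ _ (hanon v1 (hz'z hv1)) (heq0.symm.trans hd)
          obtain ⟨u, hu_z', hs⟩ : ∃ u, u ∈ z' ∧ s = Term.var u := by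
            by_cases hsz : Term.IsZVar s z
            · obtain ⟨u, hu, he⟩ := hsz
              refine ⟨u, ?_, he⟩
              exact hclose v0 hv0z' _ hatoms (by simp [QAtom.vars]) u hu
                (var_mem_vars_iff.mpr (by simp [QAtom.terms, he]))
            · exfalso
              obtain ⟨d, hd⟩ := htermind _ hatoms s (by simp [QAtom.terms]) hsz
              exact hnoanonind _ _ (hanon v0 (hz'z hv0z')) (heq0.trans hd)
          rw [hs, termVal_var_can] at heq0
          simp only [QAtom.mult, hs, termVal_var_can]
          rw [hgz'v v0 hv0z', hgz'v u hu_z', heq0]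
          exact (if_pos rfl).trans_ne one_ne_zero
        | roleAt P' s1 s2 =>
          have hm := hmult _ hatoms
          simp only [QAtom.mult] at hm
          by_cases h1 : Term.IsZVar s1 z <;> by_cases h2 : Term.IsZVar s2 z
          · obtain ⟨u1, hu1, he1⟩ := h1
            obtain ⟨u2, hu2, he2⟩ := h2
            have hu1' : u1 ∈ z' := hclose v1 hv1 _ hatoms hv1in u1 hu1
              (var_mem_vars_iff.mpr (by simp [QAtom.terms, he1]))
            have hu2' : u2 ∈ z' := hclose v1 hv1 _ hatoms hv1in u2 hu2
              (var_mem_vars_iff.mpr (by simp [QAtom.terms, he2]))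
            rw [he1, he2, termVal_var_can, termVal_var_can] at hm
            simp only [QAtom.mult, he1, he2, termVal_var_can]
            rcases can_edge_cases hm with ⟨a1, b1, ha1, _⟩ | ⟨j, hj, hw⟩ | ⟨j, hj, hw⟩
            · exact absurd ha1 (fun hh => hnoanonind _ _ (hanon u1 hu1) hh)
            · have hwt := (hsimA (f u2) (hbelow u2 hu2')).mp hw
              rw [hj, relabel_below_child (hbelow u1 hu1')] at hwt
              rw [hgz'v u1 hu1', hgz'v u2 hu2', hj,
                relabel_below_child (hbelow u1 hu1'), can_r_child, if_pos hwt]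
              simp
            · have hwt := (hsimA (f u1) (hbelow u1 hu1')).mp hw
              rw [hj, relabel_below_child (hbelow u2 hu2')] at hwt
              rw [hgz'v u1 hu1', hgz'v u2 hu2', hj,
                relabel_below_child (hbelow u2 hu2'), can_r_childinv, if_pos hwt]
              simp
          · -- s1 is a z-variable, s2 is not
            obtain ⟨u1, hu1, he1⟩ := h1
            have hu1' : u1 ∈ z' := hclose v1 hv1 _ hatoms hv1in u1 hu1
              (var_mem_vars_iff.mpr (by simp [QAtom.terms, he1]))
            obtain ⟨hs2c0, hfu1, hR0⟩ := hpin2 P' s1 s2 hatoms u1 hu1' he1 h2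
            rcases hA'eq with ⟨hRa, hAe⟩ | ⟨hRa, hAe⟩
            · rw [hR0] at hRa
              exact absurd hRa (by simp)
            · have hPP : P' = Pα := by
                rw [hR0] at hRa
                injection hRa
              have hs2a : termVal
                  (canInterp ⟨K.tbox, alphaABox z' (alpha z') (freshA q z z') (freshB q)⟩) g s2
                    = CanElem.ind (freshA q z z') := by
                cases s2 with
                | ind d =>
                  have hd : d = c0 := by
                    have h := hs2c0
                    rw [termVal_ind_can, canInterp_indMap] at h
                    exact CanElem.ind.inj h
                  have hmemt : Term.ind d ∈ q.tTerms z z' := by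
                    apply List.mem_filter.mpr
                    refine ⟨mem_termsOfList.mpr ⟨_, hatm, by simp [QAtom.terms]⟩, ?_⟩
                    simpa using h2
                  rw [termVal_ind_can, canInterp_indMap, hac ⟨d, hmemt⟩, hd]
                | var u2 =>
                  have hu2nz : u2 ∉ z := fun hh => h2 ⟨u2, hh, rfl⟩
                  have hu2nz' : u2 ∉ z' := fun hh => hu2nz (hz'z hh)
                  have hu2sv : u2 ∈ subVars q z' :=
                    mem_subVars.mpr ⟨_, hatm, by simp [QAtom.vars, Term.varsOf]⟩
                  rw [termVal_var_can]
                  exact hgsv u2 hu2nz' hu2sv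
              have hgu1 : g u1 = CanElem.ind (freshB q) := by
                rw [hgz'v u1 hu1', hfu1]
                exact relabel_self _ _
              simp only [QAtom.mult, he1, termVal_var_can]
              rw [hs2a, hgu1, can_r_ind]
              show (((alphaABox z' (alpha z') (freshA q z z') (freshB q)).count
                  (Assertion.roleA P' (freshB q) (freshA q z z')) : ℕ) : ℕ∞) ≠ 0
              rw [hAe, hPP, Multiset.count_singleton, if_pos rfl]
              simp
          · -- s2 is a z-variable, s1 is not
            obtain ⟨u2, hu2, he2⟩ := h2
            have hu2' : u2 ∈ z' := hclose v1 hv1 _ hatoms hv1in u2 hu2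
              (var_mem_vars_iff.mpr (by simp [QAtom.terms, he2]))
            obtain ⟨hs1c0, hfu2, hR0⟩ := hpin1 P' s1 s2 hatoms u2 hu2' he2 h1
            rcases hA'eq with ⟨hRa, hAe⟩ | ⟨hRa, hAe⟩
            · have hPP : P' = Pα := by
                rw [hR0] at hRa
                injection hRa
              have hs1a : termVal
                  (canInterp ⟨K.tbox, alphaABox z' (alpha z') (freshA q z z') (freshB q)⟩) g s1
                    = CanElem.ind (freshA q z z') := by
                cases s1 with
                | ind d =>
                  have hd : d = c0 := by
                    have h := hs1c0
                    rw [termVal_ind_can, canInterp_indMap] at h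
                    exact CanElem.ind.inj h
                  have hmemt : Term.ind d ∈ q.tTerms z z' := by
                    apply List.mem_filter.mpr
                    refine ⟨mem_termsOfList.mpr ⟨_, hatm, by simp [QAtom.terms]⟩, ?_⟩
                    simpa using h1
                  rw [termVal_ind_can, canInterp_indMap, hac ⟨d, hmemt⟩, hd]
                | var u1 =>
                  have hu1nz : u1 ∉ z := fun hh => h1 ⟨u1, hh, rfl⟩
                  have hu1nz' : u1 ∉ z' := fun hh => hu1nz (hz'z hh)
                  have hu1sv : u1 ∈ subVars q z' :=
                    mem_subVars.mpr ⟨_, hatm, by simp [QAtom.vars, Term.varsOf]⟩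
                  rw [termVal_var_can]
                  exact hgsv u1 hu1nz' hu1sv
              have hgu2 : g u2 = CanElem.ind (freshB q) := by
                rw [hgz'v u2 hu2', hfu2]
                exact relabel_self _ _
              simp only [QAtom.mult, he2, termVal_var_can]
              rw [hs1a, hgu2, can_r_ind]
              show (((alphaABox z' (alpha z') (freshA q z z') (freshB q)).count
                  (Assertion.roleA P' (freshA q z z') (freshB q)) : ℕ) : ℕ∞) ≠ 0
              rw [hAe, hPP, Multiset.count_singleton, if_pos rfl]
              simp
            · rw [hR0] at hRa
              exact absurd hRa (by simp)
          · exfalso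
            have hv1t := var_mem_vars_iff.mp hv1in
            simp only [QAtom.terms, List.mem_cons, List.mem_singleton, List.not_mem_nil,
              or_false] at hv1t
            rcases hv1t with h | h
            · exact h1 ⟨v1, hz'z hv1, h.symm⟩
            · exact h2 ⟨v1, hz'z hv1, h.symm⟩
      show (1 : ℕ∞) ≤ realQAnswer K.tbox q z z' (alpha z')
      refine le_trans ?_ (le_bagSum _ ⟨g, hg1, hg2, hg3⟩)
      apply one_le_list_prod
      intro x hx
      obtain ⟨atm, hatm, rfl⟩ := List.mem_map.mp hx
      exact hgatoms atm hatm
    rcases hαcase with ⟨Pα, tα, vα, hvα, htnz, heqα⟩ | ⟨Pα, tα, vα, hvα, htnz, heqα⟩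
    · exact hcont Pα tα vα hvα htnz (Or.inl heqα)
    · exact hcont Pα tα vα hvα htnz (Or.inr heqα)
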